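/- arXiv:1908.08324 — 2 statements merged into one kernel-verified Lean document; each statement's English description precedes it below -/
import Mathlib

section
/- Let H be a simply connected combinatorial strata structure endowed with a datum (N, {P_J}) of nodal strata, with nodal separating blocks enumerated B₁, …, B_n and maps Φ_m as defined. Then for every 0 ≤ m ≤ n, the image Δ_m of Φ_m has exactly m+1 elements. -/
/-- A combinatorial strata structure with minimal set of indices the (finite) type `I`:
an open subset of `𝒫(I)` (i.e. a family closed under taking subsets) containing all
singletons. -/
def IsCSS {I : Type*} (H : Set (Finset I)) : Prop :=
  (∀ J ∈ H, ∀ J' : Finset I, J' ⊆ J → J' ∈ H) ∧ ∀ i : I, ({i} : Finset I) ∈ H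

/-- `level H k` is `H(k)`, the set of strata of `H` with exactly `k` elements. -/
def level {I : Type*} (H : Set (Finset I)) (k : ℕ) : Set (Finset I) :=
  {J ∈ H | J.card = k}

/-- A `k`-path in `H`: a nonempty sequence of strata of `H(k)` such that the union of
any two consecutive entries lies in `H(k+1)`. -/
def IsKPath {I : Type*} [DecidableEq I] (H : Set (Finset I)) (k : ℕ)
    (γ : List (Finset I)) : Prop :=
  γ ≠ [] ∧ (∀ J ∈ γ, J ∈ level H k) ∧
    γ.Chain' fun J J' => (J ∪ J') ∈ level H (k + 1)

/-- The path `γ` joins `J` and `J'`. -/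
def Joins {I : Type*} (γ : List (Finset I)) (J J' : Finset I) : Prop :=
  γ.head? = some J ∧ γ.getLast? = some J'

/-- The subsupport of a path: the sequence of unions of consecutive entries. -/
def subSup {I : Type*} [DecidableEq I] (γ : List (Finset I)) : List (Finset I) :=
  List.zipWith (· ∪ ·) γ γ.tail

open Classical in
/-- `kappa B γ`: the number of entries of the subsupport of `γ` that belong to `B`. -/
noncomputable def kappa {I : Type*} [DecidableEq I] (B : Set (Finset I))
    (γ : List (Finset I)) : ℕ :=
  (subSup γ).countP fun J => decide (J ∈ B)

/-- `A` is `k`-connected in `H`: any two elements of `A` are joined by a `k`-path in `H`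
with support contained in `A`. -/
def KConnectedIn {I : Type*} [DecidableEq I] (H : Set (Finset I)) (k : ℕ)
    (A : Set (Finset I)) : Prop :=
  ∀ J ∈ A, ∀ J' ∈ A, ∃ γ : List (Finset I),
    IsKPath H k γ ∧ Joins γ J J' ∧ ∀ K ∈ γ, K ∈ A

/-- `C` is a `k`-connected component of `A` in `H`: a maximal nonempty `k`-connected
subset of `A`. -/
def IsKComponent {I : Type*} [DecidableEq I] (H : Set (Finset I)) (k : ℕ)
    (A C : Set (Finset I)) : Prop :=
  C.Nonempty ∧ C ⊆ A ∧ KConnectedIn H k C ∧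
    ∀ C' : Set (Finset I), C ⊆ C' → C' ⊆ A → KConnectedIn H k C' → C' = C

/-- `H` is 1-connected: `H(1)` is 1-connected in `H`. -/
def OneConnected {I : Type*} [DecidableEq I] (H : Set (Finset I)) : Prop :=
  KConnectedIn H 1 (level H 1)

/-- One-sided version of an elementary homotopic pair of 1-paths in `H`. -/
def ElemPairCore {I : Type*} [DecidableEq I] (H : Set (Finset I))
    (ε ε' : List (Finset I)) : Prop :=
  ε = ε'
  ∨ (∃ i₁ i₂ : I, ε = [{i₁}, {i₂}, {i₁}] ∧ ε' = [{i₁}])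
  ∨ (∃ i₁ i₂ i₃ : I, ε = [{i₁}, {i₂}] ∧ ε' = [{i₁}, {i₃}, {i₂}] ∧
      IsKPath H 2 [{i₁, i₃}, {i₃, i₂}])

/-- An elementary homotopic pair of 1-paths in `H` (up to swapping the two paths). -/
def ElemPair {I : Type*} [DecidableEq I] (H : Set (Finset I))
    (ε ε' : List (Finset I)) : Prop :=
  ElemPairCore H ε ε' ∨ ElemPairCore H ε' ε

/-- `γ₂` is obtained from `γ₁` by an elementary homotopy. -/
def ElemHomotopy {I : Type*} [DecidableEq I] (H : Set (Finset I))
    (γ₁ γ₂ : List (Finset I)) : Prop :=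
  ∃ δ ε₁ ε₂ ρ : List (Finset I),
    ElemPair H ε₁ ε₂ ∧ γ₁ = δ ++ ε₁ ++ ρ ∧ γ₂ = δ ++ ε₂ ++ ρ

/-- `γ` and `γ'` are homotopically equivalent in `H` with support in `A`: they are linked
by a finite chain of elementary homotopies in which every intermediate 1-path has
support in `A`. -/
def HomotopicIn {I : Type*} [DecidableEq I] (H A : Set (Finset I))
    (γ γ' : List (Finset I)) : Prop :=
  (IsKPath H 1 γ ∧ ∀ J ∈ γ, J ∈ A) ∧
    Relation.ReflTransGen
      (fun g₁ g₂ => ElemHomotopy H g₁ g₂ ∧ IsKPath H 1 g₂ ∧ ∀ J ∈ g₂, J ∈ A) γ γ'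

/-- A 1-connected subset `A ⊆ H(1)` is simply connected in `H`: any two 1-paths in `H`
with support in `A` joining the same strata are homotopically equivalent in `H` with
support in `A`. -/
def SimplyConnectedIn {I : Type*} [DecidableEq I] (H A : Set (Finset I)) : Prop :=
  KConnectedIn H 1 A ∧
    ∀ γ γ' : List (Finset I), IsKPath H 1 γ → IsKPath H 1 γ' →
      (∀ J ∈ γ, J ∈ A) → (∀ J ∈ γ', J ∈ A) →
      γ.head? = γ'.head? → γ.getLast? = γ'.getLast? →
      HomotopicIn H A γ γ'

/-- `H` is simply connected: `H(1)` is simply connected in `H`. -/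
def SimplyConnected {I : Type*} [DecidableEq I] (H : Set (Finset I)) : Prop :=
  SimplyConnectedIn H (level H 1)

/-- The closure of `A` in `H`: the strata of `H` containing some element of `A`. -/
def Cl {I : Type*} (H A : Set (Finset I)) : Set (Finset I) :=
  {J' ∈ H | ∃ J ∈ A, J ⊆ J'}

/-- A datum of nodal strata `(N, {P_J})` in `H`: a subset `N ⊆ H` together with, for each
`J ∈ N`, a partition `P_J = {J₊, J₋}` of `J` into two nonempty parts, such that for every
`J ∈ N` and `J' ⊆ J` one has `J' ∈ N` iff `J' ∩ J₊ ≠ ∅ ≠ J' ∩ J₋`, and in that case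
`P_{J'} = {J' ∩ J₊, J' ∩ J₋}`. -/
structure NodalDatum {I : Type*} [DecidableEq I] (H : Set (Finset I)) : Type _ where
  N : Set (Finset I)
  N_sub : N ⊆ H
  plus : Finset I → Finset I
  minus : Finset I → Finset I
  plus_nonempty : ∀ J ∈ N, (plus J).Nonempty
  minus_nonempty : ∀ J ∈ N, (minus J).Nonempty
  union_eq : ∀ J ∈ N, plus J ∪ minus J = J
  disj : ∀ J ∈ N, Disjoint (plus J) (minus J)
  mem_iff : ∀ J ∈ N, ∀ J' : Finset I, J' ⊆ J →
    (J' ∈ N ↔ (J' ∩ plus J).Nonempty ∧ (J' ∩ minus J).Nonempty)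
  part_eq : ∀ J ∈ N, ∀ J' : Finset I, J' ⊆ J → J' ∈ N →
    ({plus J', minus J'} : Set (Finset I)) = {J' ∩ plus J, J' ∩ minus J}

/-- `N*`: the set of uninterrupted nodal strata, i.e. `J ∈ N` with `Cl_H({J}) ⊆ N`. -/
def Nstar {I : Type*} [DecidableEq I] {H : Set (Finset I)} (D : NodalDatum H) :
    Set (Finset I) :=
  {J ∈ D.N | ∀ J' ∈ H, J ⊆ J' → J' ∈ D.N}

/-- A nodal block of `N` in `H`: a 2-connected component of `N(2) = N ∩ H(2)` in `H`. -/
def IsNodalBlock {I : Type*} [DecidableEq I] {H : Set (Finset I)} (D : NodalDatum H)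
    (B : Set (Finset I)) : Prop :=
  IsKComponent H 2 (D.N ∩ level H 2) B

/-- A nodal separating block: a nodal block contained in `N*`. -/
def IsSepBlock {I : Type*} [DecidableEq I] {H : Set (Finset I)} (D : NodalDatum H)
    (B : Set (Finset I)) : Prop :=
  IsNodalBlock D B ∧ B ⊆ Nstar D

/-- The separator set: the union of all nodal separating blocks. -/
def SepSet {I : Type*} [DecidableEq I] {H : Set (Finset I)} (D : NodalDatum H) :
    Set (Finset I) :=
  ⋃₀ {B | IsSepBlock D B}

/-- `A_B(i)`: the set of `{j} ∈ H(1)` joined to `{i}` by a 1-path `γ` in `H` with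
`κ_B(γ)` even. -/
def ABset {I : Type*} [DecidableEq I] (H B : Set (Finset I)) (i : I) : Set (Finset I) :=
  {J ∈ level H 1 | ∃ γ : List (Finset I),
    IsKPath H 1 γ ∧ Joins γ {i} J ∧ Even (kappa B γ)}

/-- `B_B(i)`: the set of `{j} ∈ H(1)` joined to `{i}` by a 1-path `γ` in `H` with
`κ_B(γ)` odd. -/
def BBset {I : Type*} [DecidableEq I] (H B : Set (Finset I)) (i : I) : Set (Finset I) :=
  {J ∈ level H 1 | ∃ γ : List (Finset I),
    IsKPath H 1 γ ∧ Joins γ {i} J ∧ Odd (kappa B γ)}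

open Classical in
/-- `Φ_m` for the enumeration `B` of the nodal separating blocks and base point `i₀`,
evaluated on the singleton stratum `{i}` (identified with `i`):
`Φ_m({i})(ℓ) = 0` if `{i} ∈ A_{B_ℓ}(i₀)` and `Φ_m({i})(ℓ) = 1` (`true`) if
`{i} ∈ B_{B_ℓ}(i₀)`. -/
noncomputable def PhiM {I : Type*} [DecidableEq I] {n : ℕ} (H : Set (Finset I)) (i₀ : I)
    (B : Fin n → Set (Finset I)) (m : ℕ) (hm : m ≤ n) (i : I) : Fin m → Bool :=
  fun ℓ => decide (({i} : Finset I) ∈ BBset H (B (Fin.castLE hm ℓ)) i₀)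

section Aux
variable {I : Type*} [DecidableEq I]

open Classical

noncomputable def ind (B : Set (Finset I)) (J : Finset I) : ZMod 2 :=
  if J ∈ B then 1 else 0

noncomputable def kz (B : Set (Finset I)) (γ : List (Finset I)) : ZMod 2 :=
  ((subSup γ).map (ind B)).sum

lemma countP_cast (B : Set (Finset I)) (l : List (Finset I)) :
    ((l.countP fun J => decide (J ∈ B) : ℕ) : ZMod 2) = (l.map (ind B)).sum := by
  induction l with
  | nil => simp
  | cons a l ih =>
    rw [List.countP_cons, List.map_cons, List.sum_cons, Nat.cast_add, ih, add_comm]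
    congr 1
    by_cases h : a ∈ B <;> simp [ind, h]

lemma kappa_cast (B : Set (Finset I)) (γ : List (Finset I)) :
    ((kappa B γ : ℕ) : ZMod 2) = kz B γ := countP_cast ..

lemma odd_iff_zmod (n : ℕ) : Odd n ↔ (n : ZMod 2) = 1 := by
  rw [Nat.odd_iff, ← ZMod.natCast_mod n 2]
  rcases Nat.mod_two_eq_zero_or_one n with h | h <;> rw [h] <;> decide

lemma odd_kappa_iff (B : Set (Finset I)) (γ : List (Finset I)) :
    Odd (kappa B γ) ↔ kz B γ = 1 := by
  rw [odd_iff_zmod, kappa_cast]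

lemma subSup_cons₂ (a b : Finset I) (l : List (Finset I)) :
    subSup (a :: b :: l) = (a ∪ b) :: subSup (b :: l) := rfl

lemma subSup_singleton (a : Finset I) : subSup [a] = [] := rfl

lemma subSup_append (xs : List (Finset I)) (y : Finset I) (ys : List (Finset I)) :
    subSup (xs ++ y :: ys) = subSup (xs ++ [y]) ++ subSup (y :: ys) := by
  induction xs with
  | nil => simp [subSup_singleton]
  | cons a xs ih =>
    cases xs with
    | nil => simp [subSup_cons₂, subSup_singleton]
    | cons b xs' =>
      simp only [List.cons_append] at ih ⊢
      rw [subSup_cons₂, subSup_cons₂, ih, List.cons_append]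

lemma kz_cons₂ (B : Set (Finset I)) (a b : Finset I) (l : List (Finset I)) :
    kz B (a :: b :: l) = ind B (a ∪ b) + kz B (b :: l) := by
  simp [kz, subSup_cons₂]

lemma kz_nil (B : Set (Finset I)) : kz B [] = 0 := rfl
lemma kz_singleton (B : Set (Finset I)) (a : Finset I) : kz B [a] = 0 := rfl

lemma kz_append (B : Set (Finset I)) (xs : List (Finset I)) (y : Finset I)
    (ys : List (Finset I)) :
    kz B (xs ++ y :: ys) = kz B (xs ++ [y]) + kz B (y :: ys) := by
  unfold kz; rw [subSup_append, List.map_append, List.sum_append]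

lemma kz_split (B : Set (Finset I)) (δ ξ : List (Finset I)) (hξ : ξ ≠ []) :
    kz B (δ ++ ξ) = kz B (δ ++ [ξ.head hξ]) + kz B ξ := by
  obtain ⟨y, ys, rfl⟩ := List.exists_cons_of_ne_nil hξ
  exact kz_append B δ y ys

lemma subSup_concat (ξ : List (Finset I)) (hξ : ξ ≠ []) (r : Finset I) :
    subSup (ξ ++ [r]) = subSup ξ ++ [ξ.getLast hξ ∪ r] := by
  induction ξ with
  | nil => simp at hξ
  | cons a ξ ih =>
    cases ξ with
    | nil => simp [subSup_cons₂, subSup_singleton]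
    | cons b ξ' =>
      simp only [List.cons_append]
      rw [subSup_cons₂]
      rw [show b :: (ξ' ++ [r]) = (b :: ξ') ++ [r] from rfl, ih (by simp), subSup_cons₂]
      simp [List.getLast_cons]

lemma kz_concat (B : Set (Finset I)) (ξ : List (Finset I)) (hξ : ξ ≠ []) (r : Finset I) :
    kz B (ξ ++ [r]) = kz B ξ + ind B (ξ.getLast hξ ∪ r) := by
  unfold kz; rw [subSup_concat ξ hξ r]; simp

lemma kz_split_right (B : Set (Finset I)) (ξ : List (Finset I)) (hξ : ξ ≠ [])
    (ρ : List (Finset I)) :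
    kz B (ξ ++ ρ) = kz B ξ + kz B (ξ.getLast hξ :: ρ) := by
  cases ρ with
  | nil => simp [kz_singleton]
  | cons r ρ' =>
    rw [kz_append B ξ r ρ', kz_concat B ξ hξ r, kz_cons₂]
    ring

lemma kz_surgery (B : Set (Finset I)) (δ ρ ε ε' : List (Finset I))
    (hε : ε ≠ []) (hε' : ε' ≠ [])
    (hh : ε.head hε = ε'.head hε') (hl : ε.getLast hε = ε'.getLast hε')
    (hk : kz B ε = kz B ε') :
    kz B (δ ++ ε ++ ρ) = kz B (δ ++ ε' ++ ρ) := by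
  have key : ∀ (ξ : List (Finset I)) (hξ : ξ ≠ []),
      kz B (δ ++ ξ ++ ρ) = kz B (δ ++ [ξ.head hξ]) + kz B ξ + kz B (ξ.getLast hξ :: ρ) := by
    intro ξ hξ
    rw [List.append_assoc, kz_split B δ (ξ ++ ρ) (by simp [hξ])]
    have hh1 : (ξ ++ ρ).head (by simp [hξ]) = ξ.head hξ := List.head_append_of_ne_nil hξ
    rw [hh1, kz_split_right B ξ hξ ρ, ← add_assoc]
  rw [key ε hε, key ε' hε', hh, hl, hk]

lemma head?_append_left {α : Type*} {l₁ : List α} (l₂ : List α) {a : α}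
    (h : l₁.head? = some a) : (l₁ ++ l₂).head? = some a := by
  cases l₁ <;> simp_all

lemma getLast?_append_right {α : Type*} (l₁ : List α) {l₂ : List α} {a : α}
    (h : l₂.getLast? = some a) : (l₁ ++ l₂).getLast? = some a := by
  rw [List.getLast?_append, h]; rfl

lemma getLast?_cons_right {α : Type*} (x : α) {l : List α} {a : α}
    (h : l.getLast? = some a) : (x :: l).getLast? = some a :=
  getLast?_append_right [x] h

variable {H : Set (Finset I)} {k : ℕ}

lemma isKPath_singleton {J : Finset I} (hJ : J ∈ level H k) : IsKPath H k [J] :=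
  ⟨by simp, by simpa using hJ, List.isChain_singleton _⟩

lemma isKPath_concat {γ : List (Finset I)} (h : IsKPath H k γ) {J' : Finset I}
    (hJ' : J' ∈ level H k) (hu : γ.getLast h.1 ∪ J' ∈ level H (k + 1)) :
    IsKPath H k (γ ++ [J']) := by
  refine ⟨by simp, ?_, ?_⟩
  · intro J hJ
    rcases List.mem_append.1 hJ with h' | h'
    · exact h.2.1 J h'
    · simp at h'; subst h'; exact hJ'
  · unfold List.Chain'
    rw [List.isChain_append]
    refine ⟨h.2.2, List.isChain_singleton _, ?_⟩
    intro x hx y hy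
    simp at hy; subst hy
    rw [List.getLast?_eq_getLast h.1, Option.mem_some_iff] at hx
    rw [← hx]; exact hu

lemma isKPath_trans {γ₁ γ₂ : List (Finset I)} {z : Finset I}
    (h₁ : IsKPath H k γ₁) (h₂ : IsKPath H k γ₂)
    (hz₁ : γ₁.getLast? = some z) (hz₂ : γ₂.head? = some z) :
    IsKPath H k (γ₁ ++ γ₂.tail) ∧ (γ₁ ++ γ₂.tail).head? = γ₁.head? ∧
      (γ₁ ++ γ₂.tail).getLast? = γ₂.getLast? ∧
      ∀ J ∈ γ₁ ++ γ₂.tail, J ∈ γ₁ ∨ J ∈ γ₂ := by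
  obtain ⟨t, rfl⟩ : ∃ t, γ₂ = z :: t := by
    cases γ₂ with
    | nil => simp at hz₂
    | cons a t => simp at hz₂; exact ⟨t, by rw [hz₂]⟩
  cases t with
  | nil =>
    refine ⟨by simpa using h₁, by simp, ?_, by intro J hJ; simp at hJ; exact Or.inl hJ⟩
    rw [List.tail_cons, List.append_nil, hz₁]
    simp
  | cons b t' =>
    simp only [List.tail_cons]
    have hchain : (γ₁ ++ b :: t').Chain' fun J J' => (J ∪ J') ∈ level H (k + 1) := by
      unfold List.Chain'
      rw [List.isChain_append]
      refine ⟨h₁.2.2, h₂.2.2.tail, ?_⟩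
      intro x hx y hy
      rw [hz₁, Option.mem_some_iff] at hx
      simp at hy
      subst hx; subst hy
      exact List.isChain_cons_cons.1 h₂.2.2 |>.1
    refine ⟨⟨by simp, ?_, hchain⟩, ?_, ?_, ?_⟩
    · intro J hJ
      rcases List.mem_append.1 hJ with h' | h'
      · exact h₁.2.1 J h'
      · exact h₂.2.1 J (by simp [h'])
    · cases γ₁ with
      | nil => exact absurd rfl h₁.1
      | cons a l => simp
    · have : (b :: t').getLast? = some ((b :: t').getLast (by simp)) :=
        List.getLast?_eq_getLast _
      rw [getLast?_append_right γ₁ this, getLast?_cons_right z this]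
    · intro J hJ
      rcases List.mem_append.1 hJ with h' | h'
      · exact Or.inl h'
      · exact Or.inr (by simp [h'])

lemma comp_extend {A C : Set (Finset I)} (hC : IsKComponent H 2 A C) {e e' : Finset I}
    (he : e ∈ C) (he'A : e' ∈ A) (he'2 : e' ∈ level H 2) (hu : e ∪ e' ∈ level H 3) :
    e' ∈ C := by
  have hconn : KConnectedIn H 2 (C ∪ {e'}) := by
    have path_to : ∀ w ∈ C, ∃ γ, IsKPath H 2 γ ∧ Joins γ w e' ∧ ∀ K ∈ γ, K ∈ C ∪ {e'} := by
      intro w hw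
      obtain ⟨γ, hγ, hj, hsupp⟩ := hC.2.2.1 w hw e he
      refine ⟨γ ++ [e'], isKPath_concat hγ he'2 ?_, ⟨?_, by simp⟩, ?_⟩
      · have hle : γ.getLast hγ.1 = e := by
          have h2 := hj.2; rw [List.getLast?_eq_getLast hγ.1, Option.some_inj] at h2
          exact h2
        rw [hle]; exact hu
      · exact head?_append_left _ hj.1
      · intro K hK
        rcases List.mem_append.1 hK with h' | h'
        · exact Or.inl (hsupp K h')
        · simp at h'; simp [h']
    have path_from : ∀ w ∈ C, ∃ γ, IsKPath H 2 γ ∧ Joins γ e' w ∧ ∀ K ∈ γ, K ∈ C ∪ {e'} := by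
      intro w hw
      obtain ⟨γ, hγ, hj, hsupp⟩ := hC.2.2.1 e he w hw
      refine ⟨e' :: γ, ⟨by simp, ?_, ?_⟩, ⟨rfl, getLast?_cons_right _ hj.2⟩, ?_⟩
      · intro J hJ
        rcases List.mem_cons.1 hJ with h' | h'
        · exact h'.symm ▸ he'2
        · exact hγ.2.1 J h'
      · unfold List.Chain'
        rw [List.isChain_cons]
        refine ⟨?_, hγ.2.2⟩
        intro y hy
        have hye : y = e := by
          have h1 := hj.1
          cases γ with
          | nil => simp at hy
          | cons a l => simp at hy h1; rw [← hy, h1]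
        rw [hye, Finset.union_comm]; exact hu
      · intro K hK
        rcases List.mem_cons.1 hK with h' | h'
        · simp [h']
        · exact Or.inl (hsupp K h')
    intro x hx y hy
    rcases hx with hx | hx
    · rcases hy with hy | hy
      · obtain ⟨γ, hγ, hj, hs⟩ := hC.2.2.1 x hx y hy
        exact ⟨γ, hγ, hj, fun K hK => Or.inl (hs K hK)⟩
      · simp at hy; subst hy; exact path_to x hx
    · simp at hx; subst hx
      rcases hy with hy | hy
      · exact path_from y hy
      · simp at hy; subst hy
        exact ⟨[y], isKPath_singleton he'2, ⟨rfl, rfl⟩, by simp⟩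
  have heq := hC.2.2.2 (C ∪ {e'}) Set.subset_union_left
    (Set.union_subset hC.2.1 (by simpa using he'A)) hconn
  rw [← heq]; exact Or.inr rfl

lemma comp_eq_of_inter {A C C' : Set (Finset I)} (hC : IsKComponent H 2 A C)
    (hC' : IsKComponent H 2 A C') {z : Finset I} (hz : z ∈ C) (hz' : z ∈ C') : C = C' := by
  have glue : ∀ (D₁ D₂ : Set (Finset I)), KConnectedIn H 2 D₁ → KConnectedIn H 2 D₂ →
      z ∈ D₁ → z ∈ D₂ → ∀ x ∈ D₁, ∀ y ∈ D₂, ∃ γ, IsKPath H 2 γ ∧ Joins γ x y ∧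
        ∀ K ∈ γ, K ∈ D₁ ∪ D₂ := by
    intro D₁ D₂ hD₁ hD₂ hz₁ hz₂ x hx y hy
    obtain ⟨γ₁, hγ₁, hj₁, hs₁⟩ := hD₁ x hx z hz₁
    obtain ⟨γ₂, hγ₂, hj₂, hs₂⟩ := hD₂ z hz₂ y hy
    obtain ⟨hp, hh, hl, hm⟩ := isKPath_trans hγ₁ hγ₂ hj₁.2 hj₂.1
    refine ⟨γ₁ ++ γ₂.tail, hp, ⟨by rw [hh]; exact hj₁.1, by rw [hl]; exact hj₂.2⟩, ?_⟩
    intro K hK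
    rcases hm K hK with h' | h'
    · exact Or.inl (hs₁ K h')
    · exact Or.inr (hs₂ K h')
  have hconn : KConnectedIn H 2 (C ∪ C') := by
    intro x hx y hy
    rcases hx with hx | hx <;> rcases hy with hy | hy
    · obtain ⟨γ, h1, h2, h3⟩ := hC.2.2.1 x hx y hy
      exact ⟨γ, h1, h2, fun K hK => Or.inl (h3 K hK)⟩
    · exact glue C C' hC.2.2.1 hC'.2.2.1 hz hz' x hx y hy
    · obtain ⟨γ, h1, h2, h3⟩ := glue C' C hC'.2.2.1 hC.2.2.1 hz' hz x hx y hy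
      exact ⟨γ, h1, h2, fun K hK => (h3 K hK).symm.imp id id⟩
    · obtain ⟨γ, h1, h2, h3⟩ := hC'.2.2.1 x hx y hy
      exact ⟨γ, h1, h2, fun K hK => Or.inr (h3 K hK)⟩
  have e1 := hC.2.2.2 (C ∪ C') Set.subset_union_left (Set.union_subset hC.2.1 hC'.2.1) hconn
  have e2 := hC'.2.2.2 (C ∪ C') Set.subset_union_right (Set.union_subset hC.2.1 hC'.2.1) hconn
  exact e1.symm.trans e2

lemma ind_of_mem {B : Set (Finset I)} {J : Finset I} (h : J ∈ B) : ind B J = 1 := if_pos h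
lemma ind_of_not_mem {B : Set (Finset I)} {J : Finset I} (h : J ∉ B) : ind B J = 0 := if_neg h

lemma nodal3 {H : Set (Finset I)} (D : NodalDatum H) {T : Finset I} (hT : T ∈ D.N)
    (hcard : T.card = 3) :
    ∃ s ∈ T, ∀ J' ⊆ T, J'.card = 2 → (J' ∈ D.N ↔ s ∈ J') := by
  have key : ∀ P M : Finset I, P ∪ M = T → P.card = 1 →
      (∀ J' ⊆ T, (J' ∈ D.N ↔ (J' ∩ P).Nonempty ∧ (J' ∩ M).Nonempty)) →
      ∃ s ∈ T, ∀ J' ⊆ T, J'.card = 2 → (J' ∈ D.N ↔ s ∈ J') := by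
    intro P M hU hP1 hmem
    obtain ⟨s, hs⟩ := Finset.card_eq_one.1 hP1
    refine ⟨s, by rw [← hU, hs]; simp, ?_⟩
    intro J' hJ' h2
    rw [hmem J' hJ']
    constructor
    · rintro ⟨⟨x, hx⟩, -⟩
      rw [hs, Finset.mem_inter, Finset.mem_singleton] at hx
      exact hx.2 ▸ hx.1
    · intro hsJ
      refine ⟨⟨s, by rw [hs]; simp [hsJ]⟩, ?_⟩
      obtain ⟨a, b, hab, rfl⟩ := Finset.card_eq_two.1 h2
      have : ∃ t ∈ ({a, b} : Finset I), t ≠ s := by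
        rcases eq_or_ne a s with rfl | h
        · exact ⟨b, by simp, by rintro rfl; exact hab rfl⟩
        · exact ⟨a, by simp, h⟩
      obtain ⟨t, htJ, hts⟩ := this
      have htT : t ∈ T := hJ' htJ
      have htM : t ∈ M := by
        rw [← hU, Finset.mem_union, hs] at htT
        rcases htT with h | h
        · rw [Finset.mem_singleton] at h; exact absurd h hts
        · exact h
      exact ⟨t, Finset.mem_inter.2 ⟨htJ, htM⟩⟩
  have hU := D.union_eq T hT
  have hsum : (D.plus T).card + (D.minus T).card = 3 := by
    rw [← Finset.card_union_of_disjoint (D.disj T hT), hU, hcard]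
  have hp1 := Finset.card_pos.2 (D.plus_nonempty T hT)
  have hm1 := Finset.card_pos.2 (D.minus_nonempty T hT)
  rcases (by omega : (D.plus T).card = 1 ∨ (D.minus T).card = 1) with h1 | h1
  · exact key (D.plus T) (D.minus T) hU h1 (fun J' hJ' => D.mem_iff T hT J' hJ')
  · refine key (D.minus T) (D.plus T) (by rw [Finset.union_comm]; exact hU) h1 ?_
    intro J' hJ'
    rw [D.mem_iff T hT J' hJ']
    exact and_comm

set_option maxHeartbeats 2000000 in
lemma triangle {H : Set (Finset I)} (hH : IsCSS H) (D : NodalDatum H)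
    {Bk : Set (Finset I)} (hB : IsSepBlock D Bk) {i₁ i₂ i₃ : I}
    (h13 : ({i₁, i₃} : Finset I) ∈ level H 2) (h32 : ({i₃, i₂} : Finset I) ∈ level H 2)
    (hT : (({i₁, i₃} ∪ {i₃, i₂}) : Finset I) ∈ level H 3) :
    ind Bk {i₁, i₂} = ind Bk {i₁, i₃} + ind Bk {i₃, i₂} := by
  set T : Finset I := {i₁, i₃} ∪ {i₃, i₂} with hTdef
  have d13 : i₁ ≠ i₃ := by rintro rfl; have := h13.2; simp at this
  have d32 : i₃ ≠ i₂ := by rintro rfl; have := h32.2; simp at this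
  have d12 : i₁ ≠ i₂ := by
    rintro rfl
    have hTeq : T = {i₁, i₃} := by ext x; simp [hTdef]; try tauto
    have := hT.2
    rw [hTeq, Finset.card_pair d13] at this
    omega
  have sub12 : ({i₁, i₂} : Finset I) ⊆ T := by intro x hx; simp [hTdef] at hx ⊢; tauto
  have sub13 : ({i₁, i₃} : Finset I) ⊆ T := by intro x hx; simp [hTdef] at hx ⊢; tauto
  have sub32 : ({i₃, i₂} : Finset I) ⊆ T := by intro x hx; simp [hTdef] at hx ⊢; tauto
  have hBsub : Bk ⊆ D.N ∩ level H 2 := hB.1.2.1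
  have hext : ∀ x y : Finset I, x ∈ Bk → y ∈ D.N → y.card = 2 → y ⊆ T → x ∪ y = T →
      y ∈ Bk := by
    intro x y hx hyN hy2 hyT hxy
    have hyH : y ∈ H := hH.1 T hT.1 y hyT
    exact comp_extend hB.1 hx ⟨hyN, hyH, hy2⟩ ⟨hyH, hy2⟩ (by rw [hxy]; exact hT)
  by_cases hany : ({i₁, i₂} : Finset I) ∈ Bk ∨ ({i₁, i₃} : Finset I) ∈ Bk ∨
      ({i₃, i₂} : Finset I) ∈ Bk
  · have hTN : T ∈ D.N := by
      rcases hany with h | h | h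
      · exact (hB.2 h).2 T hT.1 sub12
      · exact (hB.2 h).2 T hT.1 sub13
      · exact (hB.2 h).2 T hT.1 sub32
    obtain ⟨s, hsT, hcrit⟩ := nodal3 D hTN hT.2
    have n12 := hcrit {i₁, i₂} sub12 (Finset.card_pair d12)
    have n13 := hcrit {i₁, i₃} sub13 (Finset.card_pair d13)
    have n32 := hcrit {i₃, i₂} sub32 (Finset.card_pair d32)
    have hu1 : ({i₁, i₂} : Finset I) ∪ {i₁, i₃} = T := by ext x; simp [hTdef]; try tauto
    have hu2 : ({i₁, i₃} : Finset I) ∪ {i₁, i₂} = T := by ext x; simp [hTdef]; try tauto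
    have hu3 : ({i₁, i₂} : Finset I) ∪ {i₃, i₂} = T := by ext x; simp [hTdef]; try tauto
    have hu4 : ({i₃, i₂} : Finset I) ∪ {i₁, i₂} = T := by ext x; simp [hTdef]; try tauto
    have hu5 : ({i₃, i₂} : Finset I) ∪ {i₁, i₃} = T := by ext x; simp [hTdef]; try tauto
    have hsT' : s = i₁ ∨ s = i₃ ∨ s = i₂ := by
      have := hsT; simp [hTdef] at this; tauto
    rcases hsT' with hs | hs | hs
    · have h32B : ({i₃, i₂} : Finset I) ∉ Bk := by
        intro h
        have hmem := n32.1 (hBsub h).1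
        rw [hs] at hmem; simp at hmem; tauto
      have h12N : ({i₁, i₂} : Finset I) ∈ D.N := n12.2 (by rw [hs]; simp)
      have h13N : ({i₁, i₃} : Finset I) ∈ D.N := n13.2 (by rw [hs]; simp)
      have both : ({i₁, i₂} : Finset I) ∈ Bk ∧ ({i₁, i₃} : Finset I) ∈ Bk := by
        rcases hany with h | h | h
        · exact ⟨h, hext _ _ h h13N (Finset.card_pair d13) sub13 hu1⟩
        · exact ⟨hext _ _ h h12N (Finset.card_pair d12) sub12 hu2, h⟩
        · exact absurd h h32B
      rw [ind_of_mem both.1, ind_of_mem both.2, ind_of_not_mem h32B]; decide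
    · have h12B : ({i₁, i₂} : Finset I) ∉ Bk := by
        intro h
        have hmem := n12.1 (hBsub h).1
        rw [hs] at hmem; simp at hmem; tauto
      have h13N : ({i₁, i₃} : Finset I) ∈ D.N := n13.2 (by rw [hs]; simp)
      have h32N : ({i₃, i₂} : Finset I) ∈ D.N := n32.2 (by rw [hs]; simp)
      have both : ({i₁, i₃} : Finset I) ∈ Bk ∧ ({i₃, i₂} : Finset I) ∈ Bk := by
        rcases hany with h | h | h
        · exact absurd h h12B
        · exact ⟨h, hext _ _ h h32N (Finset.card_pair d32) sub32 rfl⟩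
        · exact ⟨hext _ _ h h13N (Finset.card_pair d13) sub13 hu5, h⟩
      rw [ind_of_not_mem h12B, ind_of_mem both.1, ind_of_mem both.2]; decide
    · have h13B : ({i₁, i₃} : Finset I) ∉ Bk := by
        intro h
        have hmem := n13.1 (hBsub h).1
        rw [hs] at hmem; simp at hmem; tauto
      have h12N : ({i₁, i₂} : Finset I) ∈ D.N := n12.2 (by rw [hs]; simp)
      have h32N : ({i₃, i₂} : Finset I) ∈ D.N := n32.2 (by rw [hs]; simp)
      have both : ({i₁, i₂} : Finset I) ∈ Bk ∧ ({i₃, i₂} : Finset I) ∈ Bk := by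
        rcases hany with h | h | h
        · exact ⟨h, hext _ _ h h32N (Finset.card_pair d32) sub32 hu3⟩
        · exact absurd h h13B
        · exact ⟨hext _ _ h h12N (Finset.card_pair d12) sub12 hu4, h⟩
      rw [ind_of_mem both.1, ind_of_not_mem h13B, ind_of_mem both.2]; decide
  · push_neg at hany
    rw [ind_of_not_mem hany.1, ind_of_not_mem hany.2.1, ind_of_not_mem hany.2.2]; decide

lemma elem_step_kz {H : Set (Finset I)} (hH : IsCSS H) (D : NodalDatum H)
    {Bk : Set (Finset I)} (hB : IsSepBlock D Bk) {g₁ g₂ : List (Finset I)}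
    (hel : ElemHomotopy H g₁ g₂) : kz Bk g₁ = kz Bk g₂ := by
  obtain ⟨δ, ε₁, ε₂, ρ, hpair, rfl, rfl⟩ := hel
  have core : ∀ ε ε' : List (Finset I), ElemPairCore H ε ε' →
      kz Bk (δ ++ ε ++ ρ) = kz Bk (δ ++ ε' ++ ρ) := by
    intro ε ε' hcore
    rcases hcore with rfl | ⟨i₁, i₂, rfl, rfl⟩ | ⟨i₁, i₂, i₃, rfl, rfl, hp⟩
    · rfl
    · refine kz_surgery Bk δ ρ _ _ (by simp) (by simp) rfl (by simp) ?_
      rw [kz_cons₂, kz_cons₂, Finset.union_comm ({i₂} : Finset I) {i₁}]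
      rw [show kz Bk [({i₁} : Finset I)] = 0 from rfl, add_zero]
      exact CharTwo.add_self_eq_zero _
    · refine kz_surgery Bk δ ρ _ _ (by simp) (by simp) rfl (by simp) ?_
      rw [kz_cons₂, kz_cons₂, kz_cons₂,
        show kz Bk [({i₂} : Finset I)] = 0 from rfl, add_zero, add_zero]
      have h13 : ({i₁, i₃} : Finset I) ∈ level H 2 := hp.2.1 _ (by simp)
      have h32 : ({i₃, i₂} : Finset I) ∈ level H 2 := hp.2.1 _ (by simp)
      have hT : (({i₁, i₃} ∪ {i₃, i₂}) : Finset I) ∈ level H 3 := by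
        have := hp.2.2
        unfold List.Chain' at this
        rw [List.isChain_cons_cons] at this
        exact this.1
      have htri := triangle hH D hB h13 h32 hT
      have e1 : ({i₁} : Finset I) ∪ {i₂} = {i₁, i₂} := by ext x; simp
      have e2 : ({i₁} : Finset I) ∪ {i₃} = {i₁, i₃} := by ext x; simp
      have e3 : ({i₃} : Finset I) ∪ {i₂} = {i₃, i₂} := by ext x; simp
      rw [e1, e2, e3, htri]
  rcases hpair with h | h
  · exact core _ _ h
  · exact (core _ _ h).symm

lemma homotopic_kz {H : Set (Finset I)} (hH : IsCSS H) (D : NodalDatum H)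
    {Bk : Set (Finset I)} (hB : IsSepBlock D Bk) {γ γ' : List (Finset I)}
    (h : HomotopicIn H (level H 1) γ γ') : kz Bk γ = kz Bk γ' := by
  obtain ⟨-, hchain⟩ := h
  induction hchain with
  | refl => rfl
  | tail _ hstep ih => exact ih.trans (elem_step_kz hH D hB hstep.1)

lemma kz_well_defined {H : Set (Finset I)} (hH : IsCSS H) (hsc : SimplyConnected H)
    (D : NodalDatum H) {Bk : Set (Finset I)} (hB : IsSepBlock D Bk)
    {γ γ' : List (Finset I)} (h1 : IsKPath H 1 γ) (h2 : IsKPath H 1 γ')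
    (hh : γ.head? = γ'.head?) (hl : γ.getLast? = γ'.getLast?) :
    kz Bk γ = kz Bk γ' :=
  homotopic_kz hH D hB (hsc.2 γ γ' h1 h2 h1.2.1 h2.2.1 hh hl)

open Classical in
/-- The parity of `{i}` w.r.t. a block, as an element of `ZMod 2`. -/
noncomputable def phiv (H : Set (Finset I)) (i₀ : I) (Bk : Set (Finset I)) (i : I) :
    ZMod 2 :=
  if ({i} : Finset I) ∈ BBset H Bk i₀ then 1 else 0

lemma singleton_level {H : Set (Finset I)} (hH : IsCSS H) (x : I) :
    ({x} : Finset I) ∈ level H 1 := ⟨hH.2 x, Finset.card_singleton x⟩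

lemma exists_path {H : Set (Finset I)} (hH : IsCSS H) (hsc : SimplyConnected H)
    (i j : I) : ∃ γ, IsKPath H 1 γ ∧ Joins γ ({i} : Finset I) {j} := by
  obtain ⟨γ, h1, h2, -⟩ := hsc.1 _ (singleton_level hH i) _ (singleton_level hH j)
  exact ⟨γ, h1, h2⟩

lemma mem_BBset_iff_kz {H : Set (Finset I)} (hH : IsCSS H) (hsc : SimplyConnected H)
    (D : NodalDatum H) {Bk : Set (Finset I)} (hB : IsSepBlock D Bk) {i j : I}
    {γ : List (Finset I)} (hγ : IsKPath H 1 γ) (hj : Joins γ ({i} : Finset I) {j}) :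
    ({j} : Finset I) ∈ BBset H Bk i ↔ kz Bk γ = 1 := by
  constructor
  · rintro ⟨hlev, γ', hγ', hj', hodd⟩
    rw [odd_kappa_iff] at hodd
    rw [kz_well_defined hH hsc D hB hγ hγ' (hj.1.trans hj'.1.symm)
      (hj.2.trans hj'.2.symm)]
    exact hodd
  · intro hkz
    have hjlev : ({j} : Finset I) ∈ level H 1 := by
      have hmem : ({j} : Finset I) ∈ γ := by
        have h2 := hj.2
        rw [List.getLast?_eq_getLast hγ.1, Option.some_inj] at h2
        exact h2 ▸ List.getLast_mem hγ.1
      exact hγ.2.1 _ hmem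
    exact ⟨hjlev, γ, hγ, hj, (odd_kappa_iff _ _).2 hkz⟩

lemma phiv_eq_kz {H : Set (Finset I)} (hH : IsCSS H) (hsc : SimplyConnected H)
    (D : NodalDatum H) {Bk : Set (Finset I)} (hB : IsSepBlock D Bk) {i j : I}
    {γ : List (Finset I)} (hγ : IsKPath H 1 γ) (hj : Joins γ ({i} : Finset I) {j}) :
    phiv H i Bk j = kz Bk γ := by
  unfold phiv
  by_cases hmem : ({j} : Finset I) ∈ BBset H Bk i
  · rw [if_pos hmem, (mem_BBset_iff_kz hH hsc D hB hγ hj).1 hmem]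
  · rw [if_neg hmem]
    rcases (by decide : ∀ a : ZMod 2, a = 0 ∨ a = 1) (kz Bk γ) with h | h
    · exact h.symm
    · exact absurd ((mem_BBset_iff_kz hH hsc D hB hγ hj).2 h) hmem

lemma phiv_self {H : Set (Finset I)} (hH : IsCSS H) (hsc : SimplyConnected H)
    (D : NodalDatum H) {Bk : Set (Finset I)} (hB : IsSepBlock D Bk) (i : I) :
    phiv H i Bk i = 0 := by
  have h := phiv_eq_kz hH hsc D hB (isKPath_singleton (singleton_level hH i))
    (⟨rfl, rfl⟩ : Joins [({i} : Finset I)] {i} {i})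
  rw [h, kz_singleton]

lemma phiv_step {H : Set (Finset I)} (hH : IsCSS H) (hsc : SimplyConnected H)
    (D : NodalDatum H) {Bk : Set (Finset I)} (hB : IsSepBlock D Bk) {i₀ a b : I}
    (hab : ({a, b} : Finset I) ∈ level H 2) :
    phiv H i₀ Bk b = phiv H i₀ Bk a + ind Bk {a, b} := by
  obtain ⟨γ, hγ, hj⟩ := exists_path hH hsc i₀ a
  have hlast : γ.getLast hγ.1 = ({a} : Finset I) := by
    have h2 := hj.2
    rwa [List.getLast?_eq_getLast hγ.1, Option.some_inj] at h2
  have hb1 : ({b} : Finset I) ∈ level H 1 := singleton_level hH b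
  have hu : γ.getLast hγ.1 ∪ {b} ∈ level H 2 := by
    rw [hlast]; exact hab
  have hγ' : IsKPath H 1 (γ ++ [{b}]) := isKPath_concat hγ hb1 hu
  have hj' : Joins (γ ++ [({b} : Finset I)]) ({i₀} : Finset I) {b} :=
    ⟨head?_append_left _ hj.1, getLast?_append_right γ rfl⟩
  have hun : ({a} : Finset I) ∪ {b} = {a, b} := by ext x; simp
  rw [phiv_eq_kz hH hsc D hB hγ' hj', kz_concat Bk γ hγ.1, hlast, hun,
    phiv_eq_kz hH hsc D hB hγ hj]

lemma doubleton_eq {a b c d : I} (hab : a ≠ b) (h : ({a, b} : Finset I) = {c, d}) :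
    (a = c ∧ b = d) ∨ (a = d ∧ b = c) := by
  have ha : a ∈ ({c, d} : Finset I) := by rw [← h]; simp
  have hb : b ∈ ({c, d} : Finset I) := by rw [← h]; simp
  have hc : c ∈ ({a, b} : Finset I) := by rw [h]; simp
  have hd : d ∈ ({a, b} : Finset I) := by rw [h]; simp
  simp at ha hb hc hd
  rcases ha with rfl | rfl
  · rcases hb with rfl | rfl
    · exact absurd rfl hab
    · exact Or.inl ⟨rfl, rfl⟩
  · rcases hb with rfl | rfl
    · exact Or.inr ⟨rfl, rfl⟩
    · exact absurd rfl hab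

lemma adj_edges {J J' : Finset I} {a b : I} (hJab : J = {a, b}) (hab : a ≠ b)
    (hJ' : J'.card = 2) (hU : (J ∪ J').card = 3) :
    ∃ c, c ∉ J ∧ (J' = {a, c} ∨ J' = {b, c}) := by
  have hJc : J.card = 2 := by rw [hJab]; exact Finset.card_pair hab
  have hint : (J ∩ J').card = 1 := by
    have := Finset.card_union_add_card_inter J J'
    omega
  obtain ⟨s, hs⟩ := Finset.card_eq_one.1 hint
  obtain ⟨x, y, hxy, hJ'xy⟩ := Finset.card_eq_two.1 hJ'
  have hsJ : s ∈ J ∧ s ∈ J' := by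
    have : s ∈ J ∩ J' := by rw [hs]; simp
    exact ⟨(Finset.mem_inter.1 this).1, (Finset.mem_inter.1 this).2⟩
  obtain ⟨c, hcJ', hcs, hJ'sc⟩ : ∃ c, c ∈ J' ∧ c ≠ s ∧ J' = {s, c} := by
    have hsxy : s = x ∨ s = y := by
      have := hsJ.2; rw [hJ'xy] at this; simpa using this
    rcases hsxy with rfl | rfl
    · exact ⟨y, by rw [hJ'xy]; simp, fun h => hxy h.symm, hJ'xy⟩
    · exact ⟨x, by rw [hJ'xy]; simp, fun h => hxy h, by rw [hJ'xy, Finset.pair_comm]⟩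
  have hcJ : c ∉ J := by
    intro hc
    have : c ∈ J ∩ J' := Finset.mem_inter.2 ⟨hc, hcJ'⟩
    rw [hs] at this; simp at this
    exact hcs this
  have hsab : s = a ∨ s = b := by
    have := hsJ.1; rw [hJab] at this; simpa using this
  rcases hsab with rfl | rfl
  · exact ⟨c, hcJ, Or.inl hJ'sc⟩
  · exact ⟨c, hcJ, Or.inr hJ'sc⟩

lemma chain_last' {α : Type*} {R : α → α → Prop} {S : Set α} {P : α → Prop}
    (htrans : ∀ a b, a ∈ S → b ∈ S → R a b → P a → P b) :
    ∀ l : List α, (∀ x ∈ l, x ∈ S) → l.Chain' R → ∀ {x : α}, l.head? = some x → P x →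
      ∀ {y : α}, l.getLast? = some y → P y := by
  intro l
  induction l with
  | nil => intro _ _ x hx; simp at hx
  | cons a t ih =>
    intro hmem hch x hx hPx y hy
    simp only [List.head?_cons, Option.some_inj] at hx
    subst hx
    cases t with
    | nil => simp at hy; subst hy; exact hPx
    | cons b t' =>
      unfold List.Chain' at hch
      rw [List.isChain_cons_cons] at hch
      have hPb : P b := htrans a b (hmem a (by simp)) (hmem b (by simp)) hch.1 hPx
      rw [List.getLast?_cons_cons] at hy
      exact ih (fun z hz => hmem z (by simp [hz])) hch.2 rfl hPb hy

/-- Third-edge lemma: if `{a,b}` and `{b,c}` are adjacent edges of a separating block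
(with `c ∉ {a,b}`), then `{a,c}` is not nodal. -/
lemma third_edge_not_nodal {H : Set (Finset I)} (hH : IsCSS H) (D : NodalDatum H)
    {Bk : Set (Finset I)} (hB : IsSepBlock D Bk) {a b c : I}
    (hab : a ≠ b) (hJ : ({a, b} : Finset I) ∈ Bk) (hJ' : ({b, c} : Finset I) ∈ Bk)
    (hc : c ∉ ({a, b} : Finset I))
    (hT : (({a, b} ∪ {b, c}) : Finset I) ∈ level H 3) :
    ({a, c} : Finset I) ∈ level H 2 ∧ ({a, c} : Finset I) ∉ D.N := by
  have hca : c ≠ a := by intro h; exact hc (by simp [h])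
  have hcb : c ≠ b := by intro h; exact hc (by simp [h])
  have hsub : Bk ⊆ D.N ∩ level H 2 := hB.1.2.1
  have hTN : (({a, b} ∪ {b, c}) : Finset I) ∈ D.N :=
    (hB.2 hJ).2 _ hT.1 Finset.subset_union_left
  obtain ⟨s, hsT, hcrit⟩ := nodal3 D hTN hT.2
  have hsubT : ({a, c} : Finset I) ⊆ {a, b} ∪ {b, c} := by
    intro x hx; simp at hx ⊢; tauto
  have hlev : ({a, c} : Finset I) ∈ level H 2 :=
    ⟨hH.1 _ hT.1 _ hsubT, Finset.card_pair (Ne.symm hca)⟩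
  refine ⟨hlev, ?_⟩
  have hsJ : s ∈ ({a, b} : Finset I) :=
    (hcrit {a, b} Finset.subset_union_left (Finset.card_pair hab)).1 (hsub hJ).1
  have hsJ' : s ∈ ({b, c} : Finset I) :=
    (hcrit {b, c} Finset.subset_union_right (Finset.card_pair (Ne.symm hcb))).1
      (hsub hJ').1
  have hsb : s = b := by
    simp at hsJ hsJ'
    rcases hsJ with rfl | rfl
    · rcases hsJ' with h | h
      · exact h
      · exact absurd h.symm hca
    · rfl
  intro hN
  have := (hcrit {a, c} hsubT (Finset.card_pair (Ne.symm hca))).1 hN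
  rw [hsb] at this
  simp at this
  rcases this with h | h
  · exact hab h.symm
  · exact hcb h.symm

/-- Along a separating block, the (unordered) pair of `vv`-values of the endpoints of
an edge is constant, for any `vv` that is constant across non-nodal edges. -/
lemma block_pairs {V : Type*} {H : Set (Finset I)} (hH : IsCSS H) (D : NodalDatum H)
    {Bk : Set (Finset I)} (hB : IsSepBlock D Bk) (vv : I → V)
    (hE : ∀ x y : I, x ≠ y → ({x, y} : Finset I) ∈ level H 2 →
      ({x, y} : Finset I) ∉ D.N → vv x = vv y)
    {a₀ b₀ : I} (he₀ : ({a₀, b₀} : Finset I) ∈ Bk) :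
    ∀ e ∈ Bk, ∀ a b : I, e = {a, b} →
      (vv a = vv a₀ ∧ vv b = vv b₀) ∨ (vv a = vv b₀ ∧ vv b = vv a₀) := by
  have hsub : Bk ⊆ D.N ∩ level H 2 := hB.1.2.1
  have hcard2 : ∀ e ∈ Bk, e.card = 2 := fun e he => (hsub he).2.2
  have hne : ∀ {x y : I}, ({x, y} : Finset I) ∈ Bk → x ≠ y := by
    intro x y hxy h
    have := hcard2 _ hxy
    subst h; simp at this
  -- the invariant property
  set P : Finset I → Prop := fun e => ∀ a b : I, e = {a, b} →
    (vv a = vv a₀ ∧ vv b = vv b₀) ∨ (vv a = vv b₀ ∧ vv b = vv a₀) with hP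
  -- one-step transfer
  have hstep : ∀ e e', e ∈ Bk → e' ∈ Bk → (e ∪ e') ∈ level H 3 → P e → P e' := by
    intro e e' he he' hU hPe a' b' he'ab
    obtain ⟨a, b, hab, heab⟩ := Finset.card_eq_two.1 (hcard2 e he)
    -- helper : given representation e = {x,y} and e' = {y,c}, vv x = vv c
    have key : ∀ x y c : I, x ≠ y → e = {x, y} → c ∉ e → e' = {y, c} → vv x = vv c := by
      intro x y c hxy hexy hce he'yc
      have hT : (({x, y} ∪ {y, c}) : Finset I) ∈ level H 3 := by
        rw [← hexy, ← he'yc]; exact hU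
      have hcx : c ≠ x := by intro h; exact hce (by rw [hexy]; simp [h])
      obtain ⟨hlev, hnotN⟩ := third_edge_not_nodal hH D hB hxy
        (by rw [← hexy]; exact he) (by rw [← he'yc]; exact he') (by rw [← hexy]; exact hce) hT
      exact hE x c (Ne.symm hcx) hlev hnotN
    obtain ⟨c, hce, hcase⟩ := adj_edges heab hab (hcard2 e' he') hU.2
    have hPe' : P e' := by
      rcases hcase with h' | h'
      · -- e' = {a, c} ; shared vertex a ; third edge {b,c} : vv b = vv c
        have hvbc : vv b = vv c := key b a c (Ne.symm hab) (heab.trans (Finset.pair_comm a b)) hce h'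
        intro a' b' hab'
        have hca : c ≠ a := by intro h; exact hce (by rw [heab]; simp [h])
        rcases doubleton_eq (hne (h' ▸ he')) (h'.symm.trans hab') with ⟨rfl, rfl⟩ | ⟨rfl, rfl⟩
        · rcases hPe a b heab with ⟨h1, h2⟩ | ⟨h1, h2⟩
          · exact Or.inl ⟨h1, hvbc.symm.trans h2⟩
          · exact Or.inr ⟨h1, hvbc.symm.trans h2⟩
        · rcases hPe a b heab with ⟨h1, h2⟩ | ⟨h1, h2⟩
          · exact Or.inr ⟨hvbc.symm.trans h2, h1⟩
          · exact Or.inl ⟨hvbc.symm.trans h2, h1⟩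
      · -- e' = {b, c} ; shared vertex b ; third edge {a,c} : vv a = vv c
        have hvac : vv a = vv c := key a b c hab heab hce h'
        intro a' b' hab'
        rcases doubleton_eq (hne (h' ▸ he')) (h'.symm.trans hab') with ⟨rfl, rfl⟩ | ⟨rfl, rfl⟩
        · rcases hPe a b heab with ⟨h1, h2⟩ | ⟨h1, h2⟩
          · exact Or.inr ⟨h2, hvac.symm.trans h1⟩
          · exact Or.inl ⟨h2, hvac.symm.trans h1⟩
        · rcases hPe a b heab with ⟨h1, h2⟩ | ⟨h1, h2⟩
          · exact Or.inl ⟨hvac.symm.trans h1, h2⟩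
          · exact Or.inr ⟨hvac.symm.trans h1, h2⟩
    exact hPe' a' b' he'ab
  -- base case
  have hbase : P ({a₀, b₀} : Finset I) := by
    intro a b hab'
    rcases doubleton_eq (hne he₀) hab' with ⟨h1, h2⟩ | ⟨h1, h2⟩
    · exact Or.inl ⟨by rw [← h1], by rw [← h2]⟩
    · exact Or.inr ⟨by rw [← h2], by rw [← h1]⟩
  -- propagate along a 2-path
  intro e he a b heab
  obtain ⟨γ, hγ, hj, hsupp⟩ := hB.1.2.2.1 _ he₀ e he
  have := chain_last' (R := fun J J' => (J ∪ J') ∈ level H (2 + 1)) (S := Bk) (P := P)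
    (fun x y hx hy hr hp => hstep x y hx hy hr hp) γ hsupp hγ.2.2 hj.1 hbase hj.2
  exact this a b heab

section Graph
variable {m : ℕ}

def gflip (k : Fin m) (x : Fin m → ZMod 2) : Fin m → ZMod 2 :=
  Function.update x k (x k + 1)

lemma gflip_apply_self (k : Fin m) (x : Fin m → ZMod 2) : gflip k x k = x k + 1 := by
  simp [gflip]

lemma gflip_apply_ne (k l : Fin m) (x : Fin m → ZMod 2) (h : l ≠ k) :
    gflip k x l = x l := by
  simp [gflip, Function.update_of_ne h]

lemma add_one_ne (a : ZMod 2) : a + 1 ≠ a := by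
  intro h
  have h0 : a + 1 = a + 0 := by rw [add_zero]; exact h
  exact one_ne_zero (add_left_cancel h0)

lemma gflip_ne (k : Fin m) (x : Fin m → ZMod 2) : gflip k x ≠ x := by
  intro h
  have := congrFun h k
  rw [gflip_apply_self] at this
  exact add_one_ne _ this

lemma gflip_gflip (k : Fin m) (x : Fin m → ZMod 2) : gflip k (gflip k x) = x := by
  funext l
  rcases eq_or_ne l k with rfl | h
  · rw [gflip_apply_self, gflip_apply_self]
    have : (1 : ZMod 2) + 1 = 0 := by decide
    rw [add_assoc, this, add_zero]
  · rw [gflip_apply_ne _ _ _ h, gflip_apply_ne _ _ _ h]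

def pg (α : Fin m → (Fin m → ZMod 2)) : SimpleGraph (Fin m → ZMod 2) where
  Adj x y := ∃ k, (x = α k ∧ y = gflip k (α k)) ∨ (y = α k ∧ x = gflip k (α k))
  symm := by
    constructor
    rintro x y ⟨k, h | h⟩
    · exact ⟨k, Or.inr h⟩
    · exact ⟨k, Or.inl h⟩
  loopless := by
    constructor
    rintro x ⟨k, ⟨rfl, h⟩ | ⟨rfl, h⟩⟩ <;> exact gflip_ne _ _ h.symm

lemma pg_adj_flip {α : Fin m → (Fin m → ZMod 2)} {x y : Fin m → ZMod 2}
    (h : (pg α).Adj x y) : ∃ k, y = gflip k x ∧ (x = α k ∨ y = α k) := by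
  obtain ⟨k, h | h⟩ := h
  · exact ⟨k, by rw [h.2, h.1], Or.inl h.1⟩
  · exact ⟨k, by rw [h.1, h.2, gflip_gflip], Or.inr h.1⟩

def wt (x : Fin m → ZMod 2) : ZMod 2 := ∑ k, x k

lemma wt_gflip (k : Fin m) (x : Fin m → ZMod 2) : wt (gflip k x) = wt x + 1 := by
  unfold wt gflip
  rw [Finset.sum_update_of_mem (Finset.mem_univ k)]
  have hrhs : ∑ l, x l = x k + ∑ l ∈ Finset.univ.erase k, x l :=
    (Finset.add_sum_erase _ _ (Finset.mem_univ k)).symm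
  rw [hrhs, Finset.sdiff_singleton_eq_erase]
  ring

lemma walk_parity {α : Fin m → (Fin m → ZMod 2)} {u v : Fin m → ZMod 2}
    (w : (pg α).Walk u v) : (w.length : ZMod 2) = wt u + wt v := by
  induction w with
  | nil => simp [CharTwo.add_self_eq_zero]
  | @cons a b c h p ih =>
    obtain ⟨k, hy, -⟩ := pg_adj_flip h
    rw [SimpleGraph.Walk.length_cons, Nat.cast_add, Nat.cast_one, ih, hy, wt_gflip]
    have hh : wt a + 1 + wt c + 1 = wt a + wt c + (1 + 1) := by ring
    rw [hh, (by decide : (1 : ZMod 2) + 1 = 0), add_zero]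

lemma walk_visit {α : Fin m → (Fin m → ZMod 2)} {u v : Fin m → ZMod 2}
    (w : (pg α).Walk u v) : ∀ k : Fin m, u k ≠ v k →
    α k ∈ w.support ∧ gflip k (α k) ∈ w.support := by
  induction w with
  | nil => intro k hk; exact absurd rfl hk
  | @cons u u' v h p ih =>
    intro k hk
    by_cases hco : u k = u' k
    · have hih := ih k (by rw [← hco]; exact hk)
      rw [SimpleGraph.Walk.support_cons]
      exact ⟨List.mem_cons_of_mem _ hih.1, List.mem_cons_of_mem _ hih.2⟩
    · obtain ⟨j, hy, hor⟩ := pg_adj_flip h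
      have hkj : k = j := by
        by_contra hne
        exact hco (hy ▸ (gflip_apply_ne j k u hne)).symm
      subst hkj
      have hu : u ∈ (SimpleGraph.Walk.cons h p).support :=
        SimpleGraph.Walk.start_mem_support _
      have hu' : u' ∈ (SimpleGraph.Walk.cons h p).support := by
        rw [SimpleGraph.Walk.support_cons]
        exact List.mem_cons_of_mem _ (SimpleGraph.Walk.start_mem_support p)
      rcases hor with hα | hα
      · exact ⟨hα ▸ hu, by rw [← hα, ← hy]; exact hu'⟩
      · refine ⟨hα ▸ hu', ?_⟩
        have : gflip k (α k) = u := by rw [← hα, hy, gflip_gflip]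
        exact this ▸ hu
end Graph

section Graph2
open SimpleGraph
variable {m : ℕ}

lemma walk_head_decomp {V : Type*} {G : SimpleGraph V} {u v : V} (w : G.Walk u v)
    (h : w.length ≠ 0) :
    ∃ (u' : V) (hadj : G.Adj u u') (p : G.Walk u' v), w = SimpleGraph.Walk.cons hadj p := by
  cases w with
  | nil => simp at h
  | cons hadj p => exact ⟨_, hadj, p, rfl⟩

theorem pg_count (α : Fin m → (Fin m → ZMod 2)) (x₀ : Fin m → ZMod 2)
    (hreach : ∀ k, (pg α).Reachable x₀ (α k)) :
    {v | (pg α).Reachable x₀ v}.ncard = m + 1 ∧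
      {v | (pg α).Reachable x₀ v} ⊆
        insert x₀ {v | ∃ k, v = α k ∨ v = gflip k (α k)} := by
  classical
  set G := pg α with hG
  set R : Set (Fin m → ZMod 2) := {v | G.Reachable x₀ v} with hRdef
  set d : (Fin m → ZMod 2) → ℕ := fun v => G.dist x₀ v with hd
  have hx₀R : x₀ ∈ R := SimpleGraph.Reachable.refl x₀
  have hadjR : ∀ {u v}, u ∈ R → G.Adj u v → v ∈ R := fun hu h =>
    SimpleGraph.Reachable.trans hu h.reachable
  have hflipR : ∀ k, gflip k (α k) ∈ R := fun k =>
    hadjR (hreach k) ⟨k, Or.inl ⟨rfl, rfl⟩⟩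
  have hpar : ∀ v ∈ R, ((d v : ℕ) : ZMod 2) = wt x₀ + wt v := by
    intro v hv
    obtain ⟨w, hw⟩ := SimpleGraph.Reachable.exists_walk_length_eq_dist hv
    show ((G.dist x₀ v : ℕ) : ZMod 2) = wt x₀ + wt v
    rw [← hw]; exact walk_parity w
  have hadj_le : ∀ {u v}, u ∈ R → G.Adj u v → d v ≤ d u + 1 := by
    intro u v hu h
    obtain ⟨w, hw⟩ := SimpleGraph.Reachable.exists_walk_length_eq_dist hu
    have hle := SimpleGraph.dist_le (w.concat h)
    rwa [SimpleGraph.Walk.length_concat, hw] at hle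
  have hadj_ne : ∀ {u v}, u ∈ R → G.Adj u v → d u ≠ d v := by
    intro u v hu h heq
    have hvR : v ∈ R := hadjR hu h
    obtain ⟨k, hy, -⟩ := pg_adj_flip h
    have h1 := hpar u hu
    have h2 := hpar v hvR
    rw [← heq, h1] at h2
    rw [hy, wt_gflip] at h2
    have h3 : (0 : ZMod 2) = 1 := by linear_combination h2
    exact one_ne_zero h3.symm
  have down_exists : ∀ v ∈ R, v ≠ x₀ → ∃ k, (v = α k ∨ v = gflip k (α k)) ∧
      gflip k v ∈ R ∧ d (gflip k v) < d v := by
    intro v hv hne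
    obtain ⟨w, hw⟩ := SimpleGraph.Reachable.exists_walk_length_eq_dist hv
    have hd1 : d v ≠ 0 := by
      intro h0
      exact hne ((SimpleGraph.Reachable.dist_eq_zero_iff hv).1 h0).symm
    obtain ⟨u', hadj, p, hp⟩ := walk_head_decomp w.reverse
      (by rw [SimpleGraph.Walk.length_reverse, hw]; exact hd1)
    have hlenp : p.length + 1 = d v := by
      have h5 := congrArg SimpleGraph.Walk.length hp
      rw [SimpleGraph.Walk.length_reverse, hw, SimpleGraph.Walk.length_cons] at h5
      exact h5.symm
    have hu'R : u' ∈ R := ⟨p.reverse⟩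
    have hdu' : d u' < d v := by
      have hle : G.dist u' x₀ ≤ p.length := SimpleGraph.dist_le p
      rw [SimpleGraph.dist_comm] at hle
      have hle' : d u' ≤ p.length := hle
      omega
    obtain ⟨k, hy, hor⟩ := pg_adj_flip hadj
    have hu'flip : u' = gflip k v := hy
    rcases hor with h | h
    · exact ⟨k, Or.inl h, hu'flip ▸ hu'R, hu'flip ▸ hdu'⟩
    · refine ⟨k, Or.inr ?_, hu'flip ▸ hu'R, hu'flip ▸ hdu'⟩
      rw [← h, hy, gflip_gflip]
  have down_uniq : ∀ v, ∀ k j : Fin m, (v = α k ∨ v = gflip k (α k)) →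
      (v = α j ∨ v = gflip j (α j)) → gflip k v ∈ R → gflip j v ∈ R →
      d (gflip k v) < d v → d (gflip j v) < d v → k = j := by
    intro v k j hk hj hkR hjR hdk hdj
    by_contra hne
    have hadjk : G.Adj v (gflip k v) := by
      rcases hk with h | h
      · exact ⟨k, Or.inl ⟨h, by rw [h]⟩⟩
      · exact ⟨k, Or.inr ⟨by rw [h, gflip_gflip], h⟩⟩
    have hadjj : G.Adj v (gflip j v) := by
      rcases hj with h | h
      · exact ⟨j, Or.inl ⟨h, by rw [h]⟩⟩
      · exact ⟨j, Or.inr ⟨by rw [h, gflip_gflip], h⟩⟩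
    have hk1 : d (gflip k v) + 1 = d v := by
      have := hadj_le hkR hadjk.symm
      omega
    have hj1 : d (gflip j v) + 1 = d v := by
      have := hadj_le hjR hadjj.symm
      omega
    by_cases hc : v k = x₀ k
    · obtain ⟨w, hw⟩ := SimpleGraph.Reachable.exists_walk_length_eq_dist hkR
      have hw' : w.length = d (gflip k v) := hw
      have hvis := walk_visit w k (by
        rw [gflip_apply_self, hc]
        exact fun hh => add_one_ne _ hh.symm)
      have hvsup : v ∈ w.support := by
        rcases hk with h | h
        · have hm := hvis.1; rwa [← h] at hm
        · have hm := hvis.2; rwa [← h] at hm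
      have hvne : v ≠ gflip k v := (gflip_ne k v).symm
      have hsplit : (w.takeUntil v hvsup).length + (w.dropUntil v hvsup).length
          = w.length := by
        rw [← SimpleGraph.Walk.length_append, SimpleGraph.Walk.take_spec]
      have hdrop1 : (w.dropUntil v hvsup).length ≠ 0 := fun h0 =>
        hvne (SimpleGraph.Walk.eq_of_length_eq_zero h0)
      have hdvle : d v ≤ (w.takeUntil v hvsup).length := SimpleGraph.dist_le _
      omega
    · obtain ⟨w, hw⟩ := SimpleGraph.Reachable.exists_walk_length_eq_dist hjR
      have hw' : w.length = d (gflip j v) := hw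
      have hvis := walk_visit w k (by
        rw [gflip_apply_ne j k v (Ne.symm (fun hh => hne hh.symm))]
        exact fun hh => hc hh.symm)
      have hvsup : v ∈ w.support := by
        rcases hk with h | h
        · have hm := hvis.1; rwa [← h] at hm
        · have hm := hvis.2; rwa [← h] at hm
      have hvne : v ≠ gflip j v := (gflip_ne j v).symm
      have hsplit : (w.takeUntil v hvsup).length + (w.dropUntil v hvsup).length
          = w.length := by
        rw [← SimpleGraph.Walk.length_append, SimpleGraph.Walk.take_spec]
      have hdrop1 : (w.dropUntil v hvsup).length ≠ 0 := fun h0 =>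
        hvne (SimpleGraph.Walk.eq_of_length_eq_zero h0)
      have hdvle : d v ≤ (w.takeUntil v hvsup).length := SimpleGraph.dist_le _
      omega
  have far_def : ∀ k : Fin m, ∃ f, (f = α k ∨ f = gflip k (α k)) ∧
      d (gflip k f) < d f ∧ f ∈ R ∧ gflip k f ∈ R := by
    intro k
    have h1 : d (α k) ≠ d (gflip k (α k)) :=
      hadj_ne (hreach k) ⟨k, Or.inl ⟨rfl, rfl⟩⟩
    rcases lt_or_gt_of_ne h1 with h | h
    · refine ⟨gflip k (α k), Or.inr rfl, ?_, hflipR k, ?_⟩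
      · rw [gflip_gflip]; exact h
      · rw [gflip_gflip]; exact hreach k
    · exact ⟨α k, Or.inl rfl, h, hreach k, hflipR k⟩
  choose far hfar₁ hfar₂ hfar₃ hfar₄ using far_def
  have hfarne : ∀ k, far k ≠ x₀ := by
    intro k h
    have h0 : d (far k) = 0 := by rw [h]; exact SimpleGraph.dist_self
    have := hfar₂ k
    omega
  have hinj : Function.Injective far := by
    intro k j h
    exact down_uniq (far k) k j (hfar₁ k) (by rw [h]; exact hfar₁ j) (hfar₄ k)
      (by rw [h]; exact hfar₄ j) (hfar₂ k) (by rw [h]; exact hfar₂ j)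
  have hR_eq : R = insert x₀ (Set.range far) := by
    apply Set.Subset.antisymm
    · intro v hv
      rcases eq_or_ne v x₀ with rfl | hne
      · exact Set.mem_insert _ _
      · obtain ⟨k, hpair, hflipmem, hlt⟩ := down_exists v hv hne
        refine Set.mem_insert_iff.2 (Or.inr ⟨k, ?_⟩)
        rcases hfar₁ k with hf | hf <;> rcases hpair with hp | hp
        · rw [hf, ← hp]
        · exfalso
          have e1 : gflip k v = far k := by rw [hp, gflip_gflip, ← hf]
          have e2 : gflip k (far k) = v := by rw [hf, ← hp]
          have h1 := hlt; rw [e1] at h1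
          have h2 := hfar₂ k; rw [e2] at h2
          omega
        · exfalso
          have e1 : gflip k v = far k := by rw [hp, ← hf]
          have e2 : gflip k (far k) = v := by rw [hf, gflip_gflip, ← hp]
          have h1 := hlt; rw [e1] at h1
          have h2 := hfar₂ k; rw [e2] at h2
          omega
        · rw [hf, ← hp]
    · intro v hv
      rcases hv with rfl | ⟨k, rfl⟩
      · exact hx₀R
      · exact hfar₃ k
  constructor
  · rw [hR_eq, Set.ncard_insert_of_notMem (by rintro ⟨k, hk⟩; exact hfarne k hk)
      (Set.finite_range far)]
    rw [← Set.image_univ, Set.ncard_image_of_injective _ hinj, Set.ncard_univ]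
    simp
  · rw [hR_eq]
    intro v hv
    rcases hv with rfl | ⟨k, rfl⟩
    · exact Set.mem_insert _ _
    · exact Set.mem_insert_iff.2 (Or.inr ⟨k, hfar₁ k⟩)
end Graph2

lemma reach_along_path {V : Type*} {H : Set (Finset I)} (G : SimpleGraph V) (vv : I → V)
    (hstep : ∀ x y : I, ({x, y} : Finset I) ∈ level H 2 →
      (vv x = vv y ∨ G.Adj (vv x) (vv y))) :
    ∀ γ : List (Finset I), IsKPath H 1 γ → ∀ x y : I,
      Joins γ ({x} : Finset I) {y} → G.Reachable (vv x) (vv y) := by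
  intro γ
  induction γ with
  | nil => intro h; exact absurd rfl h.1
  | cons J t ih =>
    intro hp x y hj
    have hJ : J = {x} := by have h1 := hj.1; simpa using h1
    cases t with
    | nil =>
      have hxy : x = y := by
        have h2 := hj.2
        simp at h2
        rw [hJ] at h2
        exact Finset.singleton_injective h2
      rw [hxy]
    | cons J₂ t' =>
      have hJ₂lev : J₂ ∈ level H 1 := hp.2.1 J₂ (by simp)
      obtain ⟨z, hz⟩ := Finset.card_eq_one.1 hJ₂lev.2
      have hchain := (List.isChain_cons_cons.1 hp.2.2).1
      rw [hJ, hz] at hchain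
      have hun : ({x} : Finset I) ∪ {z} = {x, z} := by ext w; simp
      rw [hun] at hchain
      have hpt : IsKPath H 1 (J₂ :: t') :=
        ⟨by simp, fun K hK => hp.2.1 K (List.mem_cons_of_mem _ hK), hp.2.2.tail⟩
      have hjt : Joins (J₂ :: t') ({z} : Finset I) {y} := by
        refine ⟨by simp [hz], ?_⟩
        have h2 := hj.2
        rwa [List.getLast?_cons_cons] at h2
      have hr2 := ih hpt z y hjt
      have hr1 : G.Reachable (vv x) (vv z) := by
        rcases hstep x z hchain with h | h
        · rw [h]
        · exact h.reachable
      exact hr1.trans hr2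

end Aux

/-- For every `0 ≤ m ≤ n`, the image `Δ_m` of `Φ_m` has exactly
`m + 1` elements. -/
theorem card_image_PhiM
    {I : Type*} [Fintype I] [DecidableEq I] (H : Set (Finset I))
    (hH : IsCSS H) (hsc : SimplyConnected H)
    (D : NodalDatum H) (n : ℕ) (B : Fin n → Set (Finset I))
    (hblock : ∀ ℓ : Fin n, IsSepBlock D (B ℓ)) (hinj : Function.Injective B)
    (hsurj : ∀ C : Set (Finset I), IsSepBlock D C → ∃ ℓ : Fin n, C = B ℓ)
    (i₀ : I) :
    ∀ (m : ℕ) (hm : m ≤ n), (Set.range (PhiM H i₀ B m hm)).ncard = m + 1 := by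
  intro m hm
  classical
  set Bm : Fin m → Set (Finset I) := fun k => B (Fin.castLE hm k) with hBm
  have hblockm : ∀ k, IsSepBlock D (Bm k) := fun k => hblock _
  set vv : I → (Fin m → ZMod 2) := fun i k => phiv H i₀ (Bm k) i with hvv
  have hdisj : ∀ k l : Fin n, k ≠ l → ∀ e ∈ B k, e ∉ B l := by
    intro k l hkl e hek hel
    exact hkl (hinj (comp_eq_of_inter (hblock k).1 (hblock l).1 hek hel))
  have hdisjm : ∀ k l : Fin m, k ≠ l → ∀ e ∈ Bm k, e ∉ Bm l := by
    intro k l hkl e hek hel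
    exact hdisj _ _ (fun h => hkl (Fin.castLE_injective hm h)) e hek hel
  have hstep_co : ∀ x y : I, ({x, y} : Finset I) ∈ level H 2 → ∀ k : Fin m,
      vv y k = vv x k + ind (Bm k) {x, y} := by
    intro x y hxy k
    exact phiv_step hH hsc D (hblockm k) hxy
  have hE : ∀ x y : I, x ≠ y → ({x, y} : Finset I) ∈ level H 2 →
      ({x, y} : Finset I) ∉ D.N → vv x = vv y := by
    intro x y hne hlev hnotN
    funext k
    have h1 := hstep_co x y hlev k
    have h0 : ({x, y} : Finset I) ∉ Bm k := fun hmem => hnotN ((hblockm k).1.2.1 hmem).1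
    rw [ind_of_not_mem h0, add_zero] at h1
    exact h1.symm
  have hedge : ∀ k : Fin m, ∃ a b : I, ({a, b} : Finset I) ∈ Bm k := by
    intro k
    obtain ⟨e, he⟩ := (hblockm k).1.1
    obtain ⟨a, b, hab, rfl⟩ := Finset.card_eq_two.1 ((hblockm k).1.2.1 he).2.2
    exact ⟨a, b, he⟩
  choose ae be hedge using hedge
  set alp : Fin m → (Fin m → ZMod 2) := fun k => vv (ae k) with halp
  have hbe : ∀ k, vv (be k) = gflip k (alp k) := by
    intro k
    funext l
    have hlev : ({ae k, be k} : Finset I) ∈ level H 2 := ((hblockm k).1.2.1 (hedge k)).2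
    have h1 := hstep_co (ae k) (be k) hlev l
    rcases eq_or_ne l k with h | hlk
    · subst l
      rw [gflip_apply_self, h1, ind_of_mem (hedge k)]
      try simp [halp]
    · rw [gflip_apply_ne _ _ _ hlk, h1,
        ind_of_not_mem (hdisjm k l (fun h => hlk h.symm) _ (hedge k)), add_zero]
      try simp [halp]
  have hpair : ∀ k : Fin m, ∀ e ∈ Bm k, ∀ a b : I, e = {a, b} →
      (vv a = alp k ∧ vv b = gflip k (alp k)) ∨
        (vv a = gflip k (alp k) ∧ vv b = alp k) := by
    intro k e he a b heab
    rcases block_pairs hH D (hblockm k) vv hE (hedge k) e he a b heab with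
      ⟨h1, h2⟩ | ⟨h1, h2⟩
    · exact Or.inl ⟨h1, by rw [h2, hbe k]⟩
    · exact Or.inr ⟨by rw [h1, hbe k], h2⟩
  have hstep : ∀ x y : I, ({x, y} : Finset I) ∈ level H 2 →
      (vv x = vv y ∨ (pg alp).Adj (vv x) (vv y)) := by
    intro x y hlev
    by_cases hex : ∃ k : Fin m, ({x, y} : Finset I) ∈ Bm k
    · obtain ⟨k, hk⟩ := hex
      right
      rcases hpair k _ hk x y rfl with ⟨h1, h2⟩ | ⟨h1, h2⟩
      · exact ⟨k, Or.inl ⟨h1, h2⟩⟩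
      · exact ⟨k, Or.inr ⟨h2, h1⟩⟩
    · push_neg at hex
      left
      funext l
      have h1 := hstep_co x y hlev l
      rw [ind_of_not_mem (hex l), add_zero] at h1
      exact h1.symm
  have hreachv : ∀ i : I, (pg alp).Reachable (vv i₀) (vv i) := by
    intro i
    obtain ⟨γ, hγ, hj⟩ := exists_path hH hsc i₀ i
    exact reach_along_path (pg alp) vv hstep γ hγ i₀ i hj
  obtain ⟨hcount, hsub⟩ := pg_count alp (vv i₀) (fun k => hreachv (ae k))
  have hrange : Set.range vv = {v | (pg alp).Reachable (vv i₀) v} := by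
    apply Set.Subset.antisymm
    · rintro v ⟨i, rfl⟩; exact hreachv i
    · intro v hv
      rcases Set.mem_insert_iff.1 (hsub hv) with rfl | ⟨k, h | h⟩
      · exact ⟨i₀, rfl⟩
      · exact ⟨ae k, h.symm⟩
      · exact ⟨be k, (hbe k).trans h.symm⟩
  set T : (Fin m → Bool) → (Fin m → ZMod 2) := fun g k => if g k then 1 else 0 with hT
  have hTinj : Function.Injective T := by
    intro g g' h
    funext k
    have hco := congrFun h k
    by_cases h1 : g k <;> by_cases h2 : g' k <;>
      simp [h1, h2, hT] at hco ⊢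
  have hphi : ∀ i : I, T (PhiM H i₀ B m hm i) = vv i := by
    intro i
    funext k
    show (if (PhiM H i₀ B m hm i k) then (1 : ZMod 2) else 0) = phiv H i₀ (Bm k) i
    unfold PhiM phiv
    by_cases hmem : ({i} : Finset I) ∈ BBset H (B (Fin.castLE hm k)) i₀
    · simp [hmem, hBm]
    · simp [hmem, hBm]
  have himg : T '' Set.range (PhiM H i₀ B m hm) = Set.range vv := by
    ext v
    constructor
    · rintro ⟨g, ⟨i, rfl⟩, rfl⟩; exact ⟨i, (hphi i).symm⟩
    · rintro ⟨i, rfl⟩; exact ⟨_, ⟨i, rfl⟩, hphi i⟩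
  have hfin := Set.ncard_image_of_injective (Set.range (PhiM H i₀ B m hm)) hTinj
  rw [himg, hrange, hcount] at hfin
  exact hfin.symm
end

section
/- Let H be a simply connected combinatorial strata structure endowed with a datum (N, {P_J}) of nodal strata, with nodal separating blocks enumerated B₁, …, B_n and maps Φ_m as defined. Fix 0 ≤ m ≤ n, an element c ∈ Δ_m, and {i}, {j} ∈ Φ_m^{-1}(c). Then there is a 1-path γ in H joining {i} and {j} such that κ_{B_ℓ}(γ) = 0 for every ℓ = 1, 2, …, m. -/
section Aux
variable {I : Type*} [DecidableEq I] {H B : Set (Finset I)} {k : ℕ}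
open Classical



lemma subSup_cons_cons (x y : Finset I) (t : List (Finset I)) :
    subSup (x :: y :: t) = (x ∪ y) :: subSup (y :: t) := rfl

@[simp] lemma kappa_nil : kappa B ([] : List (Finset I)) = 0 := rfl
@[simp] lemma kappa_single (x : Finset I) : kappa B [x] = 0 := rfl

lemma kappa_cons_cons (x y : Finset I) (t : List (Finset I)) :
    kappa B (x :: y :: t) = (if (x ∪ y) ∈ B then 1 else 0) + kappa B (y :: t) := by
  simp [kappa, subSup_cons_cons, List.countP_cons]
  by_cases h : (x ∪ y) ∈ B <;> simp [h] <;> omega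

lemma kappa_split (xs : List (Finset I)) (h : Finset I) (ys : List (Finset I)) :
    kappa B (xs ++ h :: ys) = kappa B (xs ++ [h]) + kappa B (h :: ys) := by
  induction xs with
  | nil => simp
  | cons x xs ih =>
    cases xs with
    | nil => simp [kappa_cons_cons]
    | cons x' xs' =>
      simp only [List.cons_append] at ih ⊢
      rw [kappa_cons_cons, kappa_cons_cons x x', ih]
      omega

lemma kappa_eq_zero {γ : List (Finset I)} (h : ∀ e ∈ subSup γ, e ∉ B) :
    kappa B γ = 0 := by
  rw [kappa, List.countP_eq_zero]
  intro e he
  simp [h e he]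

-- concatenation of paths at a common endpoint
lemma path_concat {p q : List (Finset I)} {u x v : Finset I}
    (hp : IsKPath H k p) (hq : IsKPath H k q)
    (hpj : Joins p u x) (hqj : Joins q x v) :
    IsKPath H k (p ++ q.tail) ∧ Joins (p ++ q.tail) u v ∧
      ∀ B : Set (Finset I), kappa B (p ++ q.tail) = kappa B p + kappa B q := by
  obtain ⟨hp0, hp1, hp2⟩ := hp
  obtain ⟨hq0, hq1, hq2⟩ := hq
  obtain ⟨hph, hpl⟩ := hpj
  obtain ⟨hqh, hql⟩ := hqj
  -- q = x :: q.tail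
  have hq_eq : q = x :: q.tail := by
    cases q with
    | nil => simp at hqh
    | cons a t => simp_all [List.head?_cons]
  -- p = p.dropLast ++ [x]
  have hp_eq : p = p.dropLast ++ [x] := by
    have := List.getLast?_eq_getLast hp0
    rw [this] at hpl
    injection hpl with hh
    rw [← hh]
    exact (List.dropLast_append_getLast hp0).symm
  constructor
  · refine ⟨by simp [hp0], ?_, ?_⟩
    · intro J hJ
      rcases List.mem_append.1 hJ with h | h
      · exact hp1 J h
      · exact hq1 J (by rw [hq_eq]; exact List.mem_cons_of_mem _ h)
    · have hq2' : List.Chain' (fun J J' => (J ∪ J') ∈ level H (k+1)) (x :: q.tail) := by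
        rw [← hq_eq]; exact hq2
      apply List.IsChain.append hp2 hq2'.tail
      intro y hy z hz
      rw [hpl] at hy
      injection hy with hy; subst hy
      rcases hqt : q.tail with _ | ⟨z', t'⟩
      · rw [hqt] at hz; simp at hz
      · rw [hqt] at hz hq2'
        simp only [List.tail_cons, List.head?_cons, Option.mem_def, Option.some.injEq] at hz
        subst hz
        exact (List.isChain_cons_cons.1 hq2').1
  constructor
  · constructor
    · rw [List.head?_append_of_ne_nil _ hp0]; exact hph
    · rcases hqt : q.tail with _ | ⟨z', t'⟩
      · have : q = [x] := by rw [hq_eq, hqt]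
        rw [this] at hql; simp at hql
        simp [hql ▸ hpl, hqt]
      · rw [List.getLast?_append_cons]
        rw [hq_eq, hqt] at hql
        rw [List.getLast?_cons_cons] at hql
        exact hql
  · intro B
    conv_lhs => rw [hp_eq]
    rw [List.append_assoc, List.singleton_append, kappa_split]
    rw [← hp_eq, ← hq_eq]

lemma path_reverse {p : List (Finset I)} {u v : Finset I}
    (hp : IsKPath H k p) (hj : Joins p u v) :
    IsKPath H k p.reverse ∧ Joins p.reverse v u := by
  obtain ⟨hp0, hp1, hp2⟩ := hp
  refine ⟨⟨by simp [hp0], by simpa using hp1, ?_⟩, ?_, ?_⟩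
  · unfold List.Chain' at *; rw [List.isChain_reverse]
    exact hp2.imp fun J J' h => by rwa [Finset.union_comm] at h
  · rw [List.head?_reverse]; exact hj.2
  · rw [List.getLast?_reverse]; exact hj.1
lemma path_infix {γ l : List (Finset I)} (hp : IsKPath H k γ)
    (h : l <:+: γ) (h0 : l ≠ []) : IsKPath H k l :=
  ⟨h0, fun J hJ => hp.2.1 J (h.mem hJ), hp.2.2.infix h⟩

lemma split_first {C : Set (Finset I)} : ∀ {γ : List (Finset I)}, 1 ≤ kappa C γ →
    ∃ δ a b ν, γ = δ ++ a :: b :: ν ∧ (a ∪ b) ∈ C ∧ kappa C (δ ++ [a]) = 0 := by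
  intro γ
  induction γ with
  | nil => intro h; simp [kappa, subSup] at h
  | cons x t ih =>
    intro h
    cases t with
    | nil => simp [kappa, subSup] at h
    | cons y t' =>
      by_cases hxy : (x ∪ y) ∈ C
      · exact ⟨[], x, y, t', by simp, hxy, by simp⟩
      · rw [kappa_cons_cons, if_neg hxy] at h
        rw [Nat.zero_add] at h
        obtain ⟨δ', a, b, ν, heq, hab, hz⟩ := ih h
        refine ⟨x :: δ', a, b, ν, by simp [heq], hab, ?_⟩
        cases δ' with
        | nil =>
          simp only [List.nil_append, List.cons.injEq] at heq
          simp only [List.nil_append] at hz ⊢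
          show kappa C (x :: a :: []) = 0
          rw [kappa_cons_cons, ← heq.1, if_neg hxy]
          simp
        | cons y' δ'' =>
          simp only [List.cons_append, List.cons.injEq] at heq
          simp only [List.cons_append] at hz ⊢
          rw [kappa_cons_cons, if_neg (heq.1 ▸ hxy : x ∪ y' ∉ C), hz]

end Aux

section Nodal
variable {I : Type*} [DecidableEq I] {H : Set (Finset I)} {D : NodalDatum H}

lemma absorb {C : Set (Finset I)} (hC : IsSepBlock D C) {f e : Finset I}
    (hfN : f ∈ D.N) (hf2 : f ∈ level H 2) (he : e ∈ C)
    (hu : f ∪ e ∈ level H 3) : f ∈ C := by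
  obtain ⟨⟨hne, hsub, hconn, hmax⟩, _⟩ := hC
  have he2 : e ∈ level H 2 := (hsub he).2
  have key : C ∪ {f} = C := by
    apply hmax
    · exact Set.subset_union_left
    · rintro J (hJ | hJ)
      · exact hsub hJ
      · rcases hJ with rfl
        exact ⟨hfN, hf2⟩
    · -- 2-connectivity of C ∪ {f}
      intro J hJ J' hJ'
      have fwd : ∀ J' ∈ C, ∃ γ, IsKPath H 2 γ ∧ Joins γ f J' ∧ ∀ K ∈ γ, K ∈ C ∪ {f} := by
        intro J' hJ'
        obtain ⟨p, hp, hpj, hps⟩ := hconn e he J' hJ'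
        refine ⟨f :: p, ⟨by simp, ?_, ?_⟩, ⟨by simp, ?_⟩, ?_⟩
        · intro K hK
          rcases List.mem_cons.1 hK with rfl | hK
          · exact hf2
          · exact (hsub (hps K hK)).2
        · unfold List.Chain'; rw [List.isChain_cons]
          refine ⟨?_, hp.2.2⟩
          intro y hy
          rw [hpj.1] at hy
          injection hy with hy; subst hy
          exact hu
        · rw [show f :: p = [f] ++ p from rfl, List.getLast?_append_of_ne_nil _ hp.1]
          exact hpj.2
        · intro K hK
          rcases List.mem_cons.1 hK with rfl | hK
          · exact Or.inr rfl
          · exact Or.inl (hps K hK)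
      rcases hJ with hJ | hJ
      · rcases hJ' with hJ' | hJ'
        · obtain ⟨γ, h1, h2, h3⟩ := hconn J hJ J' hJ'
          exact ⟨γ, h1, h2, fun K hK => Or.inl (h3 K hK)⟩
        · rcases hJ' with rfl
          obtain ⟨γ, h1, h2, h3⟩ := fwd J hJ
          obtain ⟨h1', h2'⟩ := path_reverse h1 h2
          exact ⟨γ.reverse, h1', h2', fun K hK => h3 K (by simpa using hK)⟩
      · have hJf : J = f := hJ
        rcases hJ' with hJ' | hJ'
        · rw [hJf]; exact fwd J' hJ'
        · have hJ'f : J' = f := hJ'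
          rw [hJf, hJ'f]
          refine ⟨[f], ⟨by simp, ?_, List.isChain_singleton _⟩, ⟨rfl, rfl⟩, ?_⟩ <;>
            · intro K hK
              rcases List.mem_singleton.1 hK with rfl
              first | exact hf2 | exact Or.inr rfl
  rw [← key]
  exact Or.inr rfl

end Nodal

open Classical in
lemma triangle_parity {I : Type*} [DecidableEq I] {H : Set (Finset I)} {D : NodalDatum H}
    {C : Set (Finset I)} (hH : IsCSS H) (hC : IsSepBlock D C)
    {i₁ i₂ i₃ : I} (h12 : i₁ ≠ i₂) (h13 : i₁ ≠ i₃) (h23 : i₂ ≠ i₃)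
    (hT : ({i₁, i₂, i₃} : Finset I) ∈ H) :
    ((if ({i₁, i₂} : Finset I) ∈ C then 1 else 0)
      + (if ({i₁, i₃} : Finset I) ∈ C then 1 else 0)
      + (if ({i₃, i₂} : Finset I) ∈ C then 1 else 0)) % 2 = 0 := by
  classical
  set T : Finset I := {i₁, i₂, i₃} with hTdef
  have hTcard : T.card = 3 := by
    rw [hTdef]
    rw [Finset.card_insert_of_notMem (by simp [h12, h13]),
      Finset.card_insert_of_notMem (by simp [h23]), Finset.card_singleton]
  have hT3 : T ∈ level H 3 := ⟨hT, hTcard⟩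
  have hmem : ∀ x y : I, x ≠ y → x ∈ T → y ∈ T → ({x, y} : Finset I) ∈ level H 2 := by
    intro x y hxy hx hy
    refine ⟨hH.1 T hT _ ?_, Finset.card_pair hxy⟩
    intro z hz
    rcases Finset.mem_insert.1 hz with rfl | hz
    · exact hx
    · exact (Finset.mem_singleton.1 hz) ▸ hy
  by_cases hanyC : ({i₁, i₂} : Finset I) ∈ C ∨ ({i₁, i₃} : Finset I) ∈ C ∨
      ({i₃, i₂} : Finset I) ∈ C
  · -- T is nodal
    have hCN : C ⊆ D.N := fun J hJ => (hC.1.2.1 hJ).1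
    have hTN : T ∈ D.N := by
      obtain ⟨e, he, hesub⟩ : ∃ e, e ∈ C ∧ e ⊆ T := by
        rcases hanyC with h | h | h
        · exact ⟨_, h, by intro z hz; simp at hz; rcases hz with rfl | rfl <;> simp [hTdef]⟩
        · exact ⟨_, h, by intro z hz; simp at hz; rcases hz with rfl | rfl <;> simp [hTdef]⟩
        · exact ⟨_, h, by intro z hz; simp at hz; rcases hz with rfl | rfl <;> simp [hTdef]⟩
      exact (hC.2 he).2 T hT hesub
    -- side function
    have hside : ∀ x ∈ T, (x ∈ D.plus T ∧ x ∉ D.minus T) ∨ (x ∉ D.plus T ∧ x ∈ D.minus T) := by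
      intro x hx
      have hx' : x ∈ D.plus T ∪ D.minus T := by rw [D.union_eq T hTN]; exact hx
      rcases Finset.mem_union.1 hx' with h | h
      · exact Or.inl ⟨h, fun h' => (Finset.disjoint_left.1 (D.disj T hTN)) h h'⟩
      · exact Or.inr ⟨fun h' => (Finset.disjoint_left.1 (D.disj T hTN)) h' h, h⟩
    have hNedge : ∀ x y : I, x ≠ y → x ∈ T → y ∈ T →
        (({x, y} : Finset I) ∈ D.N ↔ ¬ (x ∈ D.plus T ↔ y ∈ D.plus T)) := by
      intro x y hxy hx hy
      have hsub : ({x, y} : Finset I) ⊆ T := by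
        intro z hz; rcases Finset.mem_insert.1 hz with rfl | hz
        exacts [hx, (Finset.mem_singleton.1 hz) ▸ hy]
      rw [D.mem_iff T hTN _ hsub]
      have hne : ∀ S : Finset I, (({x, y} : Finset I) ∩ S).Nonempty ↔ x ∈ S ∨ y ∈ S := by
        intro S
        constructor
        · rintro ⟨z, hz⟩
          rw [Finset.mem_inter] at hz
          rcases Finset.mem_insert.1 hz.1 with rfl | hz'
          · exact Or.inl hz.2
          · exact Or.inr ((Finset.mem_singleton.1 hz') ▸ hz.2)
        · rintro (h | h)
          · exact ⟨x, Finset.mem_inter.2 ⟨by simp, h⟩⟩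
          · exact ⟨y, Finset.mem_inter.2 ⟨by simp, h⟩⟩
      rw [hne, hne]
      rcases hside x hx with ⟨h1, h2⟩ | ⟨h1, h2⟩ <;> rcases hside y hy with ⟨h3, h4⟩ | ⟨h3, h4⟩ <;>
        simp [h1, h2, h3, h4]
    -- membership in C ↔ membership in N, for the three edges
    have habs : ∀ x y u v : I, x ≠ y → u ≠ v → x ∈ T → y ∈ T → u ∈ T → v ∈ T →
        ({x, y} : Finset I) ≠ {u, v} → ({u, v} : Finset I) ∈ C →
        ({x, y} : Finset I) ∈ D.N → ({x, y} : Finset I) ∈ C := by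
      intro x y u v hxy huv hx hy hu hv hne hC' hN'
      refine absorb hC hN' (hmem x y hxy hx hy) hC' ?_
      have hsub : ({x, y} : Finset I) ∪ {u, v} ⊆ T := by
        intro z hz
        rcases Finset.mem_union.1 hz with hz | hz <;>
          · rcases Finset.mem_insert.1 hz with rfl | hz
            · assumption
            · rcases Finset.mem_singleton.1 hz with rfl; assumption
      have hcard : 3 ≤ (({x, y} : Finset I) ∪ {u, v}).card := by
        have h1 : (({x, y} : Finset I) ∩ {u, v}).card < 2 := by
          by_contra hle
          push_neg at hle
          have : ({x, y} : Finset I) ∩ {u, v} = {x, y} := Finset.eq_of_subset_of_card_le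
            Finset.inter_subset_left (by rw [Finset.card_pair hxy]; exact hle)
          have hss : ({x, y} : Finset I) ⊆ {u, v} := this ▸ Finset.inter_subset_right
          exact hne (Finset.eq_of_subset_of_card_le hss
            (by rw [Finset.card_pair hxy, Finset.card_pair huv]))
        have := Finset.card_union_add_card_inter ({x, y} : Finset I) {u, v}
        rw [Finset.card_pair hxy, Finset.card_pair huv] at this
        omega
      have : ({x, y} : Finset I) ∪ {u, v} = T :=
        Finset.eq_of_subset_of_card_le hsub (by omega)
      rw [this]
      exact hT3
    have hi1T : i₁ ∈ T := by simp [hTdef]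
    have hi2T : i₂ ∈ T := by simp [hTdef]
    have hi3T : i₃ ∈ T := by simp [hTdef]
    have hne12 : ({i₁, i₂} : Finset I) ≠ ({i₁, i₃} : Finset I) := by
      intro h
      have : i₂ ∈ ({i₁, i₃} : Finset I) := h ▸ (by simp)
      simp only [Finset.mem_insert, Finset.mem_singleton] at this
      tauto
    have hne13 : ({i₁, i₂} : Finset I) ≠ ({i₃, i₂} : Finset I) := by
      intro h
      have : i₁ ∈ ({i₃, i₂} : Finset I) := h ▸ (by simp)
      simp only [Finset.mem_insert, Finset.mem_singleton] at this
      tauto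
    have hne23 : ({i₁, i₃} : Finset I) ≠ ({i₃, i₂} : Finset I) := by
      intro h
      have : i₁ ∈ ({i₃, i₂} : Finset I) := h ▸ (by simp)
      simp only [Finset.mem_insert, Finset.mem_singleton] at this
      tauto
    have h23' : i₃ ≠ i₂ := fun h => h23 h.symm
    have e1C : (({i₁, i₂} : Finset I) ∈ C) ↔ (({i₁, i₂} : Finset I) ∈ D.N) := by
      refine ⟨fun h => hCN h, fun hN => ?_⟩
      rcases hanyC with h | h | h
      · exact h
      · exact habs i₁ i₂ i₁ i₃ h12 h13 hi1T hi2T hi1T hi3T hne12 h hN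
      · exact habs i₁ i₂ i₃ i₂ h12 h23' hi1T hi2T hi3T hi2T hne13 h hN
    have e2C : (({i₁, i₃} : Finset I) ∈ C) ↔ (({i₁, i₃} : Finset I) ∈ D.N) := by
      refine ⟨fun h => hCN h, fun hN => ?_⟩
      rcases hanyC with h | h | h
      · exact habs i₁ i₃ i₁ i₂ h13 h12 hi1T hi3T hi1T hi2T (Ne.symm hne12) h hN
      · exact h
      · exact habs i₁ i₃ i₃ i₂ h13 h23' hi1T hi3T hi3T hi2T hne23 h hN
    have e3C : (({i₃, i₂} : Finset I) ∈ C) ↔ (({i₃, i₂} : Finset I) ∈ D.N) := by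
      refine ⟨fun h => hCN h, fun hN => ?_⟩
      rcases hanyC with h | h | h
      · exact habs i₃ i₂ i₁ i₂ h23' h12 hi3T hi2T hi1T hi2T (Ne.symm hne13) h hN
      · exact habs i₃ i₂ i₁ i₃ h23' h13 hi3T hi2T hi1T hi3T (Ne.symm hne23) h hN
      · exact h
    rw [if_congr (e1C.trans (hNedge i₁ i₂ h12 hi1T hi2T)) rfl rfl,
      if_congr (e2C.trans (hNedge i₁ i₃ h13 hi1T hi3T)) rfl rfl,
      if_congr (e3C.trans (hNedge i₃ i₂ h23' hi3T hi2T)) rfl rfl]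
    by_cases p1 : i₁ ∈ D.plus T <;> by_cases p2 : i₂ ∈ D.plus T <;>
      by_cases p3 : i₃ ∈ D.plus T <;> simp [p1, p2, p3]

  · push_neg at hanyC
    rw [if_neg hanyC.1, if_neg hanyC.2.1, if_neg hanyC.2.2]

section Par
variable {I : Type*} [DecidableEq I] {B : Set (Finset I)}

lemma kd_nil (δ : List (Finset I)) {ε : List (Finset I)} (hne : ε ≠ []) :
    kappa B (δ ++ ε) = kappa B (δ ++ [ε.head hne]) + kappa B ε := by
  obtain ⟨h, t, rfl⟩ : ∃ h t, ε = h :: t := ⟨ε.head hne, ε.tail, (List.cons_head_tail hne).symm⟩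
  exact kappa_split δ _ t

lemma kd_cons (δ : List (Finset I)) {ε : List (Finset I)} (hne : ε ≠ [])
    (r : Finset I) (ρ' : List (Finset I)) :
    kappa B (δ ++ ε ++ r :: ρ') =
      kappa B (δ ++ [ε.head hne]) + kappa B ε + kappa B [ε.getLast hne, r]
        + kappa B (r :: ρ') := by
  obtain ⟨h, t, rfl⟩ : ∃ h t, ε = h :: t := ⟨ε.head hne, ε.tail, (List.cons_head_tail hne).symm⟩
  have e1 : kappa B (δ ++ (h :: t) ++ r :: ρ') =
      kappa B (δ ++ [h]) + kappa B ((h :: t) ++ r :: ρ') := by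
    rw [List.append_assoc, List.cons_append, kappa_split δ h (t ++ r :: ρ')]
  have e2 : kappa B ((h :: t) ++ r :: ρ') = kappa B ((h :: t) ++ [r]) + kappa B (r :: ρ') :=
    kappa_split (h :: t) r ρ'
  have hne' : (h :: t) ≠ [] := by simp
  set la := (h :: t).getLast hne' with hla
  have hE : h :: t = (h :: t).dropLast ++ [la] := (List.dropLast_append_getLast hne').symm
  have e3 : kappa B ((h :: t) ++ [r]) = kappa B (h :: t) + kappa B [la, r] := by
    conv_lhs => rw [hE]
    rw [List.append_assoc, List.singleton_append, kappa_split ((h::t).dropLast) la [r], ← hE]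
  simp only [List.head_cons]
  omega

lemma kappa_context {δ ρ ε ε' : List (Finset I)} (hne : ε ≠ []) (hne' : ε' ≠ [])
    (hh : ε.head? = ε'.head?) (hl : ε.getLast? = ε'.getLast?)
    (hpar : kappa B ε % 2 = kappa B ε' % 2) :
    kappa B (δ ++ ε ++ ρ) % 2 = kappa B (δ ++ ε' ++ ρ) % 2 := by
  have hhead : ε.head hne = ε'.head hne' := by
    rw [List.head?_eq_head hne, List.head?_eq_head hne'] at hh
    injection hh
  have hlast : ε.getLast hne = ε'.getLast hne' := by
    rw [List.getLast?_eq_getLast hne, List.getLast?_eq_getLast hne'] at hl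
    injection hl
  cases ρ with
  | nil =>
    rw [List.append_nil, List.append_nil, kd_nil δ hne, kd_nil δ hne', hhead]
    omega
  | cons r ρ' =>
    rw [kd_cons δ hne r ρ', kd_cons δ hne' r ρ', hhead, hlast]
    omega

end Par

section Hom
variable {I : Type*} [DecidableEq I] {H : Set (Finset I)} {D : NodalDatum H}
  {C : Set (Finset I)}
open Classical

lemma pair_level_ne {x y : I} (h : ({x, y} : Finset I) ∈ level H 2) : x ≠ y := by
  intro he
  subst he
  have := h.2
  simp at this

lemma kappa_core (hH : IsCSS H) (hC : IsSepBlock D C) {ε ε' : List (Finset I)}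
    (h : ElemPairCore H ε ε') (δ ρ : List (Finset I)) :
    kappa C (δ ++ ε ++ ρ) % 2 = kappa C (δ ++ ε' ++ ρ) % 2 := by
  rcases h with rfl | ⟨i₁, i₂, rfl, rfl⟩ | ⟨i₁, i₂, i₃, rfl, rfl, hkp⟩
  · rfl
  · apply kappa_context (by simp) (by simp) (by simp) (by simp)
    rw [kappa_cons_cons, kappa_cons_cons]
    simp only [kappa_single]
    rw [Finset.union_comm ({i₂} : Finset I) {i₁}]
    split <;> omega
  · apply kappa_context (by simp) (by simp) (by simp) (by simp)
    obtain ⟨-, hlev, hch⟩ := hkp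
    have h13 : i₁ ≠ i₃ := pair_level_ne (hlev _ (by simp))
    have h32 : i₃ ≠ i₂ := pair_level_ne (hlev _ (by simp))
    have hu : ({i₁, i₃} : Finset I) ∪ {i₃, i₂} ∈ level H 3 := by
      have := List.isChain_cons_cons.1 hch
      exact this.1
    have huT : ({i₁, i₃} : Finset I) ∪ {i₃, i₂} = {i₁, i₂, i₃} := by
      ext z; simp; tauto
    rw [huT] at hu
    have h12 : i₁ ≠ i₂ := by
      intro he
      subst he
      have h3 : ({i₁, i₁, i₃} : Finset I).card = 3 := hu.2
      have he2 : ({i₁, i₁, i₃} : Finset I) = {i₁, i₃} := by ext z; simp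
      rw [he2, Finset.card_pair h13] at h3
      omega
    have htri := triangle_parity hH hC h12 h13 (fun h => h32 h.symm) hu.1
    rw [kappa_cons_cons, kappa_cons_cons, kappa_cons_cons]
    simp only [kappa_single]
    have e1 : ({i₁} : Finset I) ∪ {i₂} = {i₁, i₂} := rfl
    have e2 : ({i₁} : Finset I) ∪ {i₃} = {i₁, i₃} := rfl
    have e3 : ({i₃} : Finset I) ∪ {i₂} = {i₃, i₂} := rfl
    rw [e1, e2, e3]
    omega

lemma kappa_elem (hH : IsCSS H) (hC : IsSepBlock D C) {γ₁ γ₂ : List (Finset I)}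
    (h : ElemHomotopy H γ₁ γ₂) : kappa C γ₁ % 2 = kappa C γ₂ % 2 := by
  obtain ⟨δ, ε₁, ε₂, ρ, hpair, rfl, rfl⟩ := h
  rcases hpair with hc | hc
  · exact kappa_core hH hC hc δ ρ
  · exact (kappa_core hH hC hc δ ρ).symm

lemma kappa_homotopic (hH : IsCSS H) (hC : IsSepBlock D C) {A : Set (Finset I)}
    {γ γ' : List (Finset I)} (h : HomotopicIn H A γ γ') :
    kappa C γ % 2 = kappa C γ' % 2 := by
  obtain ⟨-, hrel⟩ := h
  induction hrel with
  | refl => rfl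
  | tail _ h2 ih => exact ih.trans (kappa_elem hH hC h2.1)

lemma parity_endpoints (hH : IsCSS H) (hsc : SimplyConnected H) (hC : IsSepBlock D C)
    {γ γ' : List (Finset I)} (h1 : IsKPath H 1 γ) (h2 : IsKPath H 1 γ')
    (hh : γ.head? = γ'.head?) (hl : γ.getLast? = γ'.getLast?) :
    kappa C γ % 2 = kappa C γ' % 2 :=
  kappa_homotopic hH hC (hsc.2 γ γ' h1 h2 h1.2.1 h2.2.1 hh hl)

end Hom

section Sigma
variable {I : Type*} [DecidableEq I] {H : Set (Finset I)} {D : NodalDatum H}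
  {C : Set (Finset I)} {i₀ : I}
open Classical

lemma exists_path_to (hH : IsCSS H) (hsc : SimplyConnected H) (i₀ v : I) :
    ∃ p : List (Finset I), IsKPath H 1 p ∧ Joins p {i₀} {v} := by
  obtain ⟨p, hp, hj, -⟩ := hsc.1 {i₀} ⟨hH.2 i₀, Finset.card_singleton i₀⟩
    {v} ⟨hH.2 v, Finset.card_singleton v⟩
  exact ⟨p, hp, hj⟩

lemma sig_iff (hH : IsCSS H) (hsc : SimplyConnected H) (hC : IsSepBlock D C)
    {v : I} {p : List (Finset I)} (hp : IsKPath H 1 p) (hj : Joins p {i₀} {v}) :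
    (({v} : Finset I) ∈ BBset H C i₀ ↔ Odd (kappa C p)) := by
  constructor
  · rintro ⟨-, q, hq, hqj, hodd⟩
    have := parity_endpoints hH hsc hC hq hp (hqj.1.trans hj.1.symm) (hqj.2.trans hj.2.symm)
    rw [Nat.odd_iff] at hodd ⊢
    omega
  · intro hodd
    exact ⟨⟨hH.2 v, Finset.card_singleton v⟩, p, hp, hj, hodd⟩

lemma singleton_pair_path (hH : IsCSS H) {u v : I} (huv : ({u, v} : Finset I) ∈ level H 2) :
    IsKPath H 1 [({u} : Finset I), {v}] := by
  refine ⟨by simp, ?_, ?_⟩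
  · intro J hJ
    rcases List.mem_cons.1 hJ with rfl | hJ
    · exact ⟨hH.2 u, Finset.card_singleton u⟩
    · rcases List.mem_singleton.1 hJ with rfl
      exact ⟨hH.2 v, Finset.card_singleton v⟩
  · unfold List.Chain'; rw [List.isChain_cons_cons]
    refine ⟨?_, by simp⟩
    rw [← Finset.insert_eq]
    exact huv

lemma kappa_pair {B : Set (Finset I)} (u v : I) :
    kappa B [({u} : Finset I), {v}] = if ({u, v} : Finset I) ∈ B then 1 else 0 := by
  rw [kappa_cons_cons, kappa_single, ← Finset.insert_eq]
  omega

lemma sig_flip (hH : IsCSS H) (hsc : SimplyConnected H) (hC : IsSepBlock D C)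
    {u v : I} (huv : ({u, v} : Finset I) ∈ level H 2) :
    (({u, v} : Finset I) ∈ C ↔
      ¬ ((({u} : Finset I) ∈ BBset H C i₀) ↔ (({v} : Finset I) ∈ BBset H C i₀))) := by
  classical
  obtain ⟨p, hp, hj⟩ := exists_path_to hH hsc i₀ u
  obtain ⟨hq, hqj, hk⟩ := path_concat hp (singleton_pair_path hH huv) hj ⟨rfl, rfl⟩
  have h1 := sig_iff hH hsc hC hp hj
  have h2 := sig_iff (i₀ := i₀) hH hsc hC hq hqj
  rw [hk C, kappa_pair] at h2
  rw [h1, h2, Nat.odd_iff, Nat.odd_iff]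
  by_cases hm : ({u, v} : Finset I) ∈ C <;> simp [hm] <;> omega

lemma sig_path (hH : IsCSS H) (hsc : SimplyConnected H) (hC : IsSepBlock D C)
    {u v : I} {p : List (Finset I)} (hp : IsKPath H 1 p) (hj : Joins p {u} {v}) :
    (Even (kappa C p) ↔
      ((({u} : Finset I) ∈ BBset H C i₀) ↔ (({v} : Finset I) ∈ BBset H C i₀))) := by
  obtain ⟨q, hq, hqj⟩ := exists_path_to hH hsc i₀ u
  obtain ⟨hr, hrj, hk⟩ := path_concat hq hp hqj hj
  have h1 := sig_iff hH hsc hC hq hqj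
  have h2 := sig_iff (i₀ := i₀) hH hsc hC hr hrj
  rw [hk C] at h2
  rw [h1, h2, Nat.even_iff, Nat.odd_iff, Nat.odd_iff]
  omega

end Sigma

section Track
variable {I : Type*} [DecidableEq I] {H : Set (Finset I)} {D : NodalDatum H}
  {C : Set (Finset I)} {i₀ : I}
open Classical

/-- Along a 2-path inside a separating block, the vertices on a fixed side can be joined
by a 1-path whose subsupport is disjoint from `N` (hence from every block). -/
lemma track (hH : IsCSS H) (hsc : SimplyConnected H) (hC : IsSepBlock D C) :
    ∀ η : List (Finset I), IsKPath H 2 η → (∀ E ∈ η, E ∈ C) →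
    ∀ E₁ E₂ : Finset I, ∀ v₁ v₂ : I, η.head? = some E₁ → η.getLast? = some E₂ →
    v₁ ∈ E₁ → v₂ ∈ E₂ →
    ((({v₁} : Finset I) ∈ BBset H C i₀) ↔ (({v₂} : Finset I) ∈ BBset H C i₀)) →
    ∃ τ : List (Finset I), IsKPath H 1 τ ∧ Joins τ {v₁} {v₂} ∧
      ∀ e ∈ subSup τ, e ∉ D.N := by
  intro η
  induction η with
  | nil => intro h; exact absurd rfl h.1
  | cons E rest ih =>
    intro hη hsupp E₁ E₂ v₁ v₂ hhead hlast hv₁ hv₂ hsig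
    have hE1 : E = E₁ := by injection hhead
    subst hE1
    have hEC : E ∈ C := hsupp E (by simp)
    have hE2' : E ∈ level H 2 := (hC.1.2.1 hEC).2
    cases rest with
    | nil =>
      have hE2 : E = E₂ := by simp at hlast; exact hlast
      subst hE2
      obtain ⟨u, w, huw, hEuw⟩ := Finset.card_eq_two.1 hE2'.2
      have hflip : ¬ ((({u} : Finset I) ∈ BBset H C i₀) ↔
          (({w} : Finset I) ∈ BBset H C i₀)) := by
        rw [← sig_flip hH hsc hC (hEuw ▸ hE2')]
        exact hEuw ▸ hEC
      have hv12 : v₁ = v₂ := by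
        rw [hEuw] at hv₁ hv₂
        simp only [Finset.mem_insert, Finset.mem_singleton] at hv₁ hv₂
        rcases hv₁ with rfl | rfl <;> rcases hv₂ with rfl | rfl <;> tauto
      subst hv12
      refine ⟨[{v₁}], ⟨by simp, ?_, List.isChain_singleton _⟩, ⟨rfl, rfl⟩, by simp [subSup]⟩
      intro J hJ
      rcases List.mem_singleton.1 hJ with rfl
      exact ⟨hH.2 v₁, Finset.card_singleton v₁⟩
    | cons E' η' =>
      have hE'C : E' ∈ C := hsupp E' (by simp)
      have hE'2 : E' ∈ level H 2 := (hC.1.2.1 hE'C).2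
      obtain ⟨u, w, huw, hEuw⟩ := Finset.card_eq_two.1 hE'2.2
      have hflip : ¬ ((({u} : Finset I) ∈ BBset H C i₀) ↔
          (({w} : Finset I) ∈ BBset H C i₀)) := by
        rw [← sig_flip hH hsc hC (hEuw ▸ hE'2)]
        exact hEuw ▸ hE'C
      -- choose v' ∈ E' on the same side as v₁
      obtain ⟨v', hv', hsv'⟩ : ∃ v' ∈ E', ((({v'} : Finset I) ∈ BBset H C i₀) ↔
          (({v₁} : Finset I) ∈ BBset H C i₀)) := by
        by_cases hcu : (({u} : Finset I) ∈ BBset H C i₀) ↔ (({v₁} : Finset I) ∈ BBset H C i₀)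
        · exact ⟨u, by rw [hEuw]; simp, hcu⟩
        · refine ⟨w, by rw [hEuw]; simp, by tauto⟩
      -- inductive hypothesis on the rest of the 2-path
      have hrest : IsKPath H 2 (E' :: η') := by
        refine ⟨by simp, fun J hJ => hη.2.1 J (List.mem_cons_of_mem _ hJ), hη.2.2.tail⟩
      obtain ⟨τ', hτ', hτj', hτN'⟩ := ih hrest (fun J hJ => hsupp J (List.mem_cons_of_mem _ hJ))
        E' E₂ v' v₂ rfl (by rw [← hlast, List.getLast?_cons_cons]) hv' hv₂ (by tauto)
      by_cases hvv : v₁ = v'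
      · subst hvv
        exact ⟨τ', hτ', hτj', hτN'⟩
      · -- connect {v₁} to {v'} through an edge not in N
        have hT : E ∪ E' ∈ level H 3 := (List.isChain_cons_cons.1 hη.2.2).1
        have hsubT : ({v₁, v'} : Finset I) ⊆ E ∪ E' := by
          intro z hz
          rcases Finset.mem_insert.1 hz with rfl | hz
          · exact Finset.mem_union_left _ hv₁
          · rcases Finset.mem_singleton.1 hz with rfl
            exact Finset.mem_union_right _ hv'
        have hf2 : ({v₁, v'} : Finset I) ∈ level H 2 :=
          ⟨hH.1 _ hT.1 _ hsubT, Finset.card_pair hvv⟩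
        have hv₁E' : v₁ ∉ E' := by
          intro hmem
          rw [hEuw] at hmem hv'
          simp only [Finset.mem_insert, Finset.mem_singleton] at hmem hv'
          rcases hmem with rfl | rfl <;> rcases hv' with rfl | rfl <;> tauto
        have hfN : ({v₁, v'} : Finset I) ∉ D.N := by
          intro hfN
          have hun : ({v₁, v'} : Finset I) ∪ E' = insert v₁ E' := by
            ext z
            simp only [Finset.mem_union, Finset.mem_insert, Finset.mem_singleton]
            constructor
            · rintro ((rfl | rfl) | h)
              · exact Or.inl rfl
              · exact Or.inr hv'
              · exact Or.inr h
            · rintro (rfl | h)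
              · exact Or.inl (Or.inl rfl)
              · exact Or.inr h
          have hcard : (insert v₁ E').card = 3 := by
            rw [Finset.card_insert_of_notMem hv₁E', hE'2.2]
          have hlev : ({v₁, v'} : Finset I) ∪ E' ∈ level H 3 := by
            rw [hun]
            refine ⟨hH.1 _ hT.1 _ ?_, hcard⟩
            intro z hz
            rcases Finset.mem_insert.1 hz with rfl | hz
            · exact Finset.mem_union_left _ hv₁
            · exact Finset.mem_union_right _ hz
          have hfC : ({v₁, v'} : Finset I) ∈ C := absorb hC hfN hf2 hE'C hlev
          have := (sig_flip (i₀ := i₀) hH hsc hC hf2).1 hfC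
          tauto
        refine ⟨{v₁} :: τ', ?_, ?_, ?_⟩
        · refine ⟨by simp, ?_, ?_⟩
          · intro J hJ
            rcases List.mem_cons.1 hJ with rfl | hJ
            · exact ⟨hH.2 v₁, Finset.card_singleton v₁⟩
            · exact hτ'.2.1 J hJ
          · unfold List.Chain'; rw [List.isChain_cons]
            refine ⟨?_, hτ'.2.2⟩
            intro y hy
            rw [hτj'.1] at hy
            injection hy with hy; subst hy
            rw [← Finset.insert_eq]
            exact hf2
        · refine ⟨rfl, ?_⟩
          rw [show ({v₁} :: τ') = [{v₁}] ++ τ' from rfl,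
            List.getLast?_append_of_ne_nil _ hτ'.1]
          exact hτj'.2
        · intro e he
          have hτcons : τ' = {v'} :: τ'.tail := by
            have := hτj'.1
            cases τ' with
            | nil => simp at this
            | cons a t => injection this with h1; rw [h1]; rfl
          rw [hτcons, subSup_cons_cons] at he
          rcases List.mem_cons.1 he with rfl | he
          · rw [← Finset.insert_eq]
            exact hfN
          · exact hτN' e (by rw [hτcons]; exact he)

end Track

/-- For `0 ≤ m ≤ n`, `c ∈ Δ_m` and `{i}, {j} ∈ Φ_m⁻¹(c)`, there is a
1-path `γ` in `H` joining `{i}` and `{j}` with `κ_{B_ℓ}(γ) = 0` for all `ℓ = 1, …, m`. -/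
theorem fiber_joined_without_crossings
    {I : Type*} [Fintype I] [DecidableEq I] (H : Set (Finset I))
    (hH : IsCSS H) (hsc : SimplyConnected H)
    (D : NodalDatum H) (n : ℕ) (B : Fin n → Set (Finset I))
    (hblock : ∀ ℓ : Fin n, IsSepBlock D (B ℓ)) (hinj : Function.Injective B)
    (hsurj : ∀ C : Set (Finset I), IsSepBlock D C → ∃ ℓ : Fin n, C = B ℓ)
    (i₀ : I) (m : ℕ) (hm : m ≤ n)
    (c : Fin m → Bool) (hc : c ∈ Set.range (PhiM H i₀ B m hm))
    (i j : I) (hi : PhiM H i₀ B m hm i = c) (hj : PhiM H i₀ B m hm j = c) :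
    ∃ γ : List (Finset I), IsKPath H 1 γ ∧
      Joins γ ({i} : Finset I) ({j} : Finset I) ∧
      ∀ ℓ : Fin m, kappa (B (Fin.castLE hm ℓ)) γ = 0 := by
  classical
  set Bl : Fin m → Set (Finset I) := fun ℓ => B (Fin.castLE hm ℓ) with hBl
  have hblk : ∀ ℓ : Fin m, IsSepBlock D (Bl ℓ) := fun ℓ => hblock _
  have hsig : ∀ ℓ : Fin m, ((({i} : Finset I) ∈ BBset H (Bl ℓ) i₀) ↔
      (({j} : Finset I) ∈ BBset H (Bl ℓ) i₀)) := by
    intro ℓ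
    have h1 : decide (({i} : Finset I) ∈ BBset H (B (Fin.castLE hm ℓ)) i₀) = c ℓ :=
      congrFun hi ℓ
    have h2 : decide (({j} : Finset I) ∈ BBset H (B (Fin.castLE hm ℓ)) i₀) = c ℓ :=
      congrFun hj ℓ
    exact decide_eq_decide.mp (h1.trans h2.symm)
  have main : ∀ K : ℕ, ∀ γ : List (Finset I), IsKPath H 1 γ → Joins γ {i} {j} →
      (∑ ℓ : Fin m, kappa (Bl ℓ) γ) = K →
      ∃ γ' : List (Finset I), IsKPath H 1 γ' ∧ Joins γ' {i} {j} ∧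
        ∀ ℓ : Fin m, kappa (Bl ℓ) γ' = 0 := by
    intro K
    induction K using Nat.strong_induction_on with
    | _ K IH =>
    intro γ hγ hγj hK
    by_cases hK0 : K = 0
    · refine ⟨γ, hγ, hγj, fun ℓ => ?_⟩
      subst hK0
      exact Finset.sum_eq_zero_iff.mp hK ℓ (Finset.mem_univ ℓ)
    · obtain ⟨ℓ₀, -, hℓ₀⟩ := Finset.exists_ne_zero_of_sum_ne_zero (hK ▸ hK0 : ∑ ℓ : Fin m, kappa (Bl ℓ) γ ≠ 0)
      set C := Bl ℓ₀ with hCdef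
      have hCblk : IsSepBlock D C := hblk ℓ₀
      have heven : Even (kappa C γ) := (sig_path (i₀ := i₀) hH hsc hCblk hγ hγj).mpr (hsig ℓ₀)
      have h2 : 2 ≤ kappa C γ := by
        rcases heven with ⟨t, ht⟩
        have : kappa C γ ≠ 0 := hℓ₀
        omega
      obtain ⟨δ, a, b, ν₁, hγeq, hab, hδ0⟩ := split_first (C := C) (γ := γ) (by omega)
      have hsp1 : kappa C γ = 1 + kappa C (b :: ν₁) := by
        rw [hγeq, kappa_split δ a (b :: ν₁), kappa_cons_cons, if_pos hab, hδ0]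
        omega
      obtain ⟨δ', cc, d, ν₂, heq2, hcd, hδ'0⟩ := split_first (C := C)
        (show 1 ≤ kappa C (b :: ν₁) by omega)
      -- names for the four singleton strata
      have hmemγ : ∀ J ∈ γ, J ∈ level H 1 := hγ.2.1
      have hbmem : b :: ν₁ = δ' ++ cc :: d :: ν₂ := heq2
      have haγ : a ∈ γ := by rw [hγeq]; simp
      have hbγ : b ∈ γ := by rw [hγeq]; simp
      have hcγ : cc ∈ γ := by rw [hγeq, hbmem]; simp
      have hdγ : d ∈ γ := by rw [hγeq, hbmem]; simp
      obtain ⟨va, rfl⟩ := Finset.card_eq_one.1 (hmemγ a haγ).2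
      obtain ⟨vb, rfl⟩ := Finset.card_eq_one.1 (hmemγ b hbγ).2
      obtain ⟨vc, rfl⟩ := Finset.card_eq_one.1 (hmemγ cc hcγ).2
      obtain ⟨vd, rfl⟩ := Finset.card_eq_one.1 (hmemγ d hdγ).2
      -- the two crossing edges
      have he₁lev : ({va} : Finset I) ∪ {vb} ∈ level H 2 := (hCblk.1.2.1 hab).2
      have he₂lev : ({vc} : Finset I) ∪ {vd} ∈ level H 2 := (hCblk.1.2.1 hcd).2
      have he₁ : ({va, vb} : Finset I) ∈ C := by rwa [Finset.insert_eq]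
      have he₂ : ({vc, vd} : Finset I) ∈ C := by rwa [Finset.insert_eq]
      have he₁lev' : ({va, vb} : Finset I) ∈ level H 2 := by rwa [← Finset.insert_eq] at he₁lev
      have he₂lev' : ({vc, vd} : Finset I) ∈ level H 2 := by rwa [← Finset.insert_eq] at he₂lev
      -- the middle path from b to c has no C-crossings, so σ(vb) = σ(vc)
      have hμpath : IsKPath H 1 (δ' ++ [({vc} : Finset I)]) := by
        apply path_infix hγ _ (by simp)
        refine ⟨δ ++ [({va} : Finset I)], ({vd} : Finset I) :: ν₂, ?_⟩
        rw [hγeq, hbmem]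
        simp
      have hμjoins : Joins (δ' ++ [({vc} : Finset I)]) {vb} {vc} := by
        constructor
        · have : (δ' ++ [({vc} : Finset I)]).head? = (δ' ++ ({vc} : Finset I) :: ({vd} : Finset I) :: ν₂).head? := by
            rw [List.head?_append, List.head?_append]
            rfl
          rw [this, ← hbmem]
          rfl
        · rw [List.getLast?_concat]
      have hσbc : (({vb} : Finset I) ∈ BBset H C i₀) ↔ (({vc} : Finset I) ∈ BBset H C i₀) :=
        (sig_path (i₀ := i₀) hH hsc hCblk hμpath hμjoins).mp (by rw [hδ'0]; exact Even.zero)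
      have hσab : ¬ ((({va} : Finset I) ∈ BBset H C i₀) ↔ (({vb} : Finset I) ∈ BBset H C i₀)) :=
        (sig_flip (i₀ := i₀) hH hsc hCblk he₁lev').mp he₁
      have hσcd : ¬ ((({vc} : Finset I) ∈ BBset H C i₀) ↔ (({vd} : Finset I) ∈ BBset H C i₀)) :=
        (sig_flip (i₀ := i₀) hH hsc hCblk he₂lev').mp he₂
      have hσad : (({va} : Finset I) ∈ BBset H C i₀) ↔ (({vd} : Finset I) ∈ BBset H C i₀) := by
        tauto
      -- a 2-path in the block C joining the two crossing edges
      obtain ⟨η, hη, hηj, hηsupp⟩ := hCblk.1.2.2.1 _ he₁ _ he₂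
      -- the parallel track
      obtain ⟨τ, hτ, hτj, hτN⟩ := track (i₀ := i₀) hH hsc hCblk η hη hηsupp
        {va, vb} {vc, vd} va vd hηj.1 hηj.2 (by simp) (by simp [Finset.mem_insert]) hσad
      -- assemble the new path
      have hp₁ : IsKPath H 1 (δ ++ [({va} : Finset I)]) := by
        apply path_infix hγ _ (by simp)
        exact ⟨[], ({vb} : Finset I) :: ν₁, by rw [hγeq]; simp⟩
      have hp₁j : Joins (δ ++ [({va} : Finset I)]) {i} {va} := by
        constructor
        · have : (δ ++ [({va} : Finset I)]).head? = γ.head? := by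
            rw [hγeq, List.head?_append, List.head?_append]
            rfl
          rw [this, hγj.1]
        · rw [List.getLast?_concat]
      have hqpath : IsKPath H 1 (({vd} : Finset I) :: ν₂) := by
        apply path_infix hγ _ (by simp)
        refine ⟨δ ++ [({va} : Finset I)] ++ δ' ++ [({vc} : Finset I)], [], ?_⟩
        rw [hγeq, hbmem]
        simp
      have hqj : Joins (({vd} : Finset I) :: ν₂) {vd} {j} := by
        constructor
        · rfl
        · have : γ.getLast? = (({vd} : Finset I) :: ν₂).getLast? := by
            rw [hγeq, hbmem, show δ ++ ({va} : Finset I) :: (δ' ++ ({vc} : Finset I) :: ({vd} : Finset I) :: ν₂) = (δ ++ ({va} : Finset I) :: δ' ++ [({vc} : Finset I)]) ++ (({vd} : Finset I) :: ν₂) from by simp,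
              List.getLast?_append_of_ne_nil _ (by simp)]
          rw [← this, hγj.2]
      obtain ⟨hπ, hπj, hπk⟩ := path_concat hp₁ hτ hp₁j hτj
      obtain ⟨hγ', hγ'j, hγ'k⟩ := path_concat hπ hqpath hπj hqj
      set γ' : List (Finset I) := (δ ++ [({va} : Finset I)]) ++ τ.tail ++ (({vd} : Finset I) :: ν₂).tail with hγ'def
      -- crossing numbers of the new path
      have hκγ' : ∀ X : Set (Finset I), kappa X γ' =
          kappa X (δ ++ [({va} : Finset I)]) + kappa X τ + kappa X (({vd} : Finset I) :: ν₂) := by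
        intro X
        rw [hγ'k X, hπk X]
      have hκτ : ∀ ℓ : Fin m, kappa (Bl ℓ) τ = 0 := by
        intro ℓ
        apply kappa_eq_zero
        intro e he hmem
        exact hτN e he ((hblk ℓ).1.2.1 hmem).1
      have hκγ : ∀ X : Set (Finset I), kappa X γ =
          kappa X (δ ++ [({va} : Finset I)]) + (if ({va} : Finset I) ∪ {vb} ∈ X then 1 else 0)
            + kappa X (δ' ++ [({vc} : Finset I)]) + (if ({vc} : Finset I) ∪ {vd} ∈ X then 1 else 0)
            + kappa X (({vd} : Finset I) :: ν₂) := by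
        intro X
        rw [hγeq, kappa_split δ _ _, kappa_cons_cons, hbmem, kappa_split δ' _ _,
          kappa_cons_cons]
        omega
      -- strict decrease of the total crossing number
      have hless : ∀ ℓ : Fin m, kappa (Bl ℓ) γ' ≤ kappa (Bl ℓ) γ := by
        intro ℓ
        rw [hκγ' (Bl ℓ), hκγ (Bl ℓ), hκτ ℓ]
        omega
      have hstrict : kappa C γ' < kappa C γ := by
        rw [hκγ' C, hκγ C, hκτ ℓ₀, if_pos hab, if_pos hcd, hδ'0]
        omega
      have hsum : (∑ ℓ : Fin m, kappa (Bl ℓ) γ') < K := by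
        rw [← hK]
        exact Finset.sum_lt_sum (fun ℓ _ => hless ℓ) ⟨ℓ₀, Finset.mem_univ ℓ₀, hstrict⟩
      exact IH _ hsum γ' hγ' hγ'j rfl
  obtain ⟨γ₀, hγ₀, hγ₀j, -⟩ := hsc.1 {i} ⟨hH.2 i, Finset.card_singleton i⟩
    {j} ⟨hH.2 j, Finset.card_singleton j⟩
  obtain ⟨γ', h1, h2, h3⟩ := main _ γ₀ hγ₀ hγ₀j rfl
  exact ⟨γ', h1, h2, h3⟩
end
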